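/- arXiv:1406.7198 — 2 statements merged into one kernel-verified Lean document; each statement's English description precedes it below -/
import Mathlib

section
/- Let L be a p/q-changemaker lattice with p > q ≥ 2, with fractional part L_F and vectors v_0, v_1, …, v_m as constructed from the set M. A nonzero vector x ∈ L_F is irreducible in L_F if and only if there exist indices 0 ≤ a ≤ b ≤ m such that x = v_a + v_{a+1} + ⋯ + v_b or x = −(v_a + v_{a+1} + ⋯ + v_b). -/
/-- The negative continued fraction `[b_0, …, b_n]⁻ = b_0 - 1/[b_1, …, b_n]⁻`. -/
def cfMinus : List ℚ → ℚ
  | [] => 0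
  | [b] => b
  | b :: c :: rest => b - 1 / cfMinus (c :: rest)

/-- The standard inner product on `ℤ^ι`. -/
def dot {ι : Type*} [Fintype ι] (x y : ι → ℤ) : ℤ := ∑ i, x i * y i

/-- The basis vector `f_i` (indices shifted: `fvec t s i` is `f_{i+1}`). -/
def fvec (t s : ℕ) (i : Fin t) : Fin t ⊕ Fin (s + 1) → ℤ := Pi.single (Sum.inl i) 1

/-- The basis vector `e_j`, `0 ≤ j ≤ s`. -/
def evec (t s : ℕ) (j : Fin (s + 1)) : Fin t ⊕ Fin (s + 1) → ℤ := Pi.single (Sum.inr j) 1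

/-- The changemaker vector `w_0 = e_0 + σ_1 f_1 + ⋯ + σ_t f_t`. -/
def w0 (t s : ℕ) (σ : Fin t → ℤ) : Fin t ⊕ Fin (s + 1) → ℤ :=
  Sum.elim σ fun j => if (j : ℕ) = 0 then 1 else 0

/-- The vector `w_k = -e_{m_{k-1}} + e_{m_{k-1}+1} + ⋯ + e_{m_k}` for `k ≥ 1`. -/
def wk (t s : ℕ) (m : ℕ → ℕ) (k : ℕ) : Fin t ⊕ Fin (s + 1) → ℤ :=
  Sum.elim 0 fun j =>
    if (j : ℕ) = m (k - 1) then -1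
    else if m (k - 1) < (j : ℕ) ∧ (j : ℕ) ≤ m k then 1 else 0

/-- The vectors `w_0, w_1, …, w_l`. -/
def wvec (t s : ℕ) (σ : Fin t → ℤ) (m : ℕ → ℕ) (k : ℕ) : Fin t ⊕ Fin (s + 1) → ℤ :=
  if k = 0 then w0 t s σ else wk t s m k

/-- The `p/q`-changemaker lattice `L = ⟨w_0, …, w_l⟩^⊥ ⊆ ℤ^{t+s+1}`. -/
def Lset (t s l : ℕ) (σ : Fin t → ℤ) (m : ℕ → ℕ) : Set (Fin t ⊕ Fin (s + 1) → ℤ) :=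
  {x | ∀ k ≤ l, dot x (wvec t s σ m k) = 0}

/-- The fractional part `L_F = ⟨w_1, …, w_l⟩^⊥ ∩ ⟨e_0, …, e_s⟩`. -/
def LFset (t s l : ℕ) (m : ℕ → ℕ) : Set (Fin t ⊕ Fin (s + 1) → ℤ) :=
  {x | (∀ i, x (Sum.inl i) = 0) ∧ ∀ k, 1 ≤ k → k ≤ l → dot x (wk t s m k) = 0}

/-- The index set `M = {0, 1, …, s} ∖ {m_0, m_1, …, m_l}`. -/
def Mset (s l : ℕ) (m : ℕ → ℕ) : Finset ℕ :=
  (Finset.range (s + 1)).filter fun j => ∀ k ≤ l, j ≠ m k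

/-- The least element of `M` (equal to `s` if `M = ∅`). -/
def minM (s l : ℕ) (m : ℕ → ℕ) : ℕ :=
  if h : (Mset s l m).Nonempty then (Mset s l m).min' h else s

/-- For `k ∈ M`, the least element `k'` of `M` greater than `k`; equal to `s`
if no such element exists. -/
def nxt (s l : ℕ) (m : ℕ → ℕ) (k : ℕ) : ℕ :=
  if h : ((Mset s l m).filter fun j => k < j).Nonempty then
    ((Mset s l m).filter fun j => k < j).min' h
  else s

/-- `v_0 = e_0 + e_1 + ⋯ + e_{min M}` (equal to `e_0 + ⋯ + e_s` if `M = ∅`). -/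
def v0vec (t s l : ℕ) (m : ℕ → ℕ) : Fin t ⊕ Fin (s + 1) → ℤ :=
  Sum.elim 0 fun j => if (j : ℕ) ≤ minM s l m then 1 else 0

/-- `v'_k = -e_k + e_{k+1} + ⋯ + e_{k'}` for `k ∈ M`. -/
def vKvec (t s l : ℕ) (m : ℕ → ℕ) (k : ℕ) : Fin t ⊕ Fin (s + 1) → ℤ :=
  Sum.elim 0 fun j =>
    if (j : ℕ) = k then -1
    else if k < (j : ℕ) ∧ (j : ℕ) ≤ nxt s l m k then 1 else 0

/-- The sequence `v_0, v_1, …, v_m` (`m = |M|`): `v_0` as above, and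
`v_1, …, v_m` are the vectors `v'_k`, `k ∈ M`, in increasing order of `k`. -/
def vSeq (t s l : ℕ) (m : ℕ → ℕ) (i : ℕ) : Fin t ⊕ Fin (s + 1) → ℤ :=
  if i = 0 then v0vec t s l m
  else vKvec t s l m (((Mset s l m).sort (· ≤ ·)).getD (i - 1) 0)

/-- `x_F = Σ_{j=0}^s (x·e_j) e_j`, the projection to the span of the `e_j`. -/
def Fpart (t s : ℕ) (x : Fin t ⊕ Fin (s + 1) → ℤ) : Fin t ⊕ Fin (s + 1) → ℤ :=
  ∑ j, dot x (evec t s j) • evec t s j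

/-- `z` is irreducible in the lattice `S`: there are no nonzero `x, y ∈ S`
with `z = x + y` and `x·y ≥ 0`. -/
def IrredIn {ι : Type*} [Fintype ι] (S : Set (ι → ℤ)) (z : ι → ℤ) : Prop :=
  ¬ ∃ x y : ι → ℤ, x ∈ S ∧ y ∈ S ∧ x ≠ 0 ∧ y ≠ 0 ∧ z = x + y ∧ 0 ≤ dot x y

/-- The data `(t, s, l, a, m, σ)` presents the `p/q`-changemaker lattice
`⟨w_0, …, w_l⟩^⊥ ⊆ ℤ^{t+s+1}`, where `p/q = n − r/q = [a_0, a_1, …, a_l]⁻` with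
`a_0 = n`, `a_k ≥ 2` for `1 ≤ k ≤ l`; `m_0 = 0`, `m_k = a_1 + ⋯ + a_k − k`,
`s = m_l`; and `(σ_1, …, σ_t)` is a nondecreasing tuple of nonnegative integers
satisfying the changemaker condition with `w_0·w_0 = 1 + Σ σ_i² = n`. -/
structure IsCMLattice (p q n r : ℤ) (t s l : ℕ) (a : ℕ → ℤ) (m : ℕ → ℕ)
    (σ : Fin t → ℤ) : Prop where
  hq2 : 2 ≤ q
  hqp : q < p
  hgcd : Int.gcd p q = 1
  hp : p = n * q - r
  hr0 : 0 < r
  hrq : r < q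
  ha0 : a 0 = n
  hak : ∀ k, 1 ≤ k → k ≤ l → 2 ≤ a k
  hcf : cfMinus ((List.range (l + 1)).map fun i => (a i : ℚ)) = (p : ℚ) / (q : ℚ)
  hm0 : m 0 = 0
  hmrec : ∀ k, 1 ≤ k → k ≤ l → (m k : ℤ) = (m (k - 1) : ℤ) + a k - 1
  hs : s = m l
  hσ0 : ∀ i, 0 ≤ σ i
  hσmono : Monotone σ
  hσcm : ∀ i : Fin t, σ i ≤ (∑ j ∈ Finset.univ.filter (· < i), σ j) + 1
  hσn : 1 + ∑ i, σ i ^ 2 = n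


open Finset

namespace CM916

/-- interval indicator -/
def ind (a b : ℕ) : ℕ → ℤ := fun i => if a ≤ i ∧ i ≤ b then 1 else 0

/-- the bilinear form of the tridiagonal Gram matrix with diagonal `g` -/
def Bg (g : ℕ → ℤ) (N : ℕ) (u w : ℕ → ℤ) : ℤ :=
  ∑ i ∈ range (N+1), g i * u i * w i
    - ∑ i ∈ range N, (u i * w (i+1) + u (i+1) * w i)

lemma Bg_slot (g : ℕ → ℤ) (N : ℕ) (u w : ℕ → ℤ) :
    Bg g N u w = (∑ i ∈ range (N+1), (g i - 2) * (u i * w i)) + u 0 * w 0 + u N * w N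
      + ∑ i ∈ range N, (u i - u (i+1)) * (w i - w (i+1)) := by
  induction N with
  | zero => simp [Bg]; ring
  | succ N ih =>
      have h1 : Bg g (N+1) u w = Bg g N u w + g (N+1) * u (N+1) * w (N+1)
          - (u N * w (N+1) + u (N+1) * w N) := by
        simp [Bg, Finset.sum_range_succ]; ring
      rw [h1, ih]
      rw [Finset.sum_range_succ (fun i => (g i - 2) * (u i * w i)) (N+1),
        Finset.sum_range_succ (fun i => (u i - u (i+1)) * (w i - w (i+1))) N]
      ring

lemma P1 (c d : ℤ) (h : c + d = 0 ∨ c + d = 1 ∨ c + d = -1) : c * d ≤ 0 := by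
  rcases h with h | h | h
  · have hd : d = -c := by omega
    subst hd; nlinarith [mul_self_nonneg c]
  · have hne : c - d ≠ 0 := by omega
    have h1 : 1 ≤ |c - d| := Int.one_le_abs hne
    have h2 : 1 ≤ (c-d)^2 := by nlinarith [sq_abs (c-d), abs_nonneg (c-d)]
    nlinarith [h2]
  · have hne : c - d ≠ 0 := by omega
    have h1 : 1 ≤ |c - d| := Int.one_le_abs hne
    have h2 : 1 ≤ (c-d)^2 := by nlinarith [sq_abs (c-d), abs_nonneg (c-d)]
    nlinarith [h2]

lemma P2 (c d v : ℤ) (h0 : c * d = 0) (hs : c + d = v) : c = 0 ∨ c = v := by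
  rcases mul_eq_zero.mp h0 with h | h
  · left; exact h
  · right; omega

lemma const_of_steps (u : ℕ → ℤ) (i j : ℕ) (hij : i ≤ j)
    (hs : ∀ t, i ≤ t → t < j → u t = u (t+1)) : u i = u j := by
  induction j, hij using Nat.le_induction with
  | base => rfl
  | succ j hij ih =>
      rw [ih (fun t ht ht' => hs t ht (by omega)), hs j hij (by omega)]

lemma vanish (N a b : ℕ) (u : ℕ → ℤ)
    (hab : a ≤ b) (hbN : b ≤ N)
    (hu_out : ∀ i, N < i → u i = 0)
    (hstep : ∀ i, i < N → i + 1 ≠ a → i ≠ b → u i = u (i+1))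
    (h0 : 1 ≤ a → u 0 = 0) (hN : b < N → u N = 0)
    (hua : u a = 0) : ∀ i, u i = 0 := by
  intro i
  rcases le_or_gt i N with hiN | hiN
  · rcases lt_or_ge i a with hia | hia
    · have : u 0 = u i := const_of_steps u 0 i (by omega) (fun t ht ht' => hstep t (by omega) (by omega) (by omega))
      rw [← this]; exact h0 (by omega)
    · rcases le_or_gt i b with hib | hib
      · have : u a = u i := const_of_steps u a i hia (fun t ht ht' => hstep t (by omega) (by omega) (by omega))
        rw [← this]; exact hua
      · have : u i = u N := const_of_steps u i N hiN (fun t ht ht' => hstep t (by omega) (by omega) (by omega))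
        rw [this]; exact hN (by omega)
  · exact hu_out i hiN

lemma abs_irred (g : ℕ → ℤ) (N a b : ℕ) (hg : ∀ i, i ≤ N → 2 ≤ g i)
    (hab : a ≤ b) (hbN : b ≤ N) (ε : ℤ) (hε : ε = 1 ∨ ε = -1)
    (u w : ℕ → ℤ) (hu_out : ∀ i, N < i → u i = 0) (hw_out : ∀ i, N < i → w i = 0)
    (hz : ∀ i, u i + w i = ε * ind a b i)
    (hu0 : ∃ i, u i ≠ 0) (hw0 : ∃ i, w i ≠ 0) (hB : 0 ≤ Bg g N u w) : False := by
  -- slot values of z are in {0, ±1}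
  have hzval : ∀ i, u i + w i = 0 ∨ u i + w i = 1 ∨ u i + w i = -1 := by
    intro i; rw [hz i]; unfold ind; split_ifs <;> rcases hε with h | h <;> simp [h]
  have hdval : ∀ i, (u i - u (i+1)) + (w i - w (i+1)) = 0 ∨
      (u i - u (i+1)) + (w i - w (i+1)) = 1 ∨ (u i - u (i+1)) + (w i - w (i+1)) = -1 := by
    intro i
    have h1 := hz i; have h2 := hz (i+1)
    unfold ind at h1 h2
    rcases hε with h | h <;> subst h <;> split_ifs at h1 h2 <;> omega
  -- each slot term is nonpositive
  have t1 : ∀ i ∈ range (N+1), (g i - 2) * (u i * w i) ≤ 0 := by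
    intro i hi
    exact mul_nonpos_of_nonneg_of_nonpos (by have := hg i (by simpa using Nat.lt_succ_iff.mp (mem_range.mp hi)); omega)
      (P1 _ _ (hzval i))
  have t4 : ∀ i ∈ range N, (u i - u (i+1)) * (w i - w (i+1)) ≤ 0 :=
    fun i _ => P1 _ _ (hdval i)
  have s1 : ∑ i ∈ range (N+1), (g i - 2) * (u i * w i) ≤ 0 := Finset.sum_nonpos t1
  have s4 : ∑ i ∈ range N, (u i - u (i+1)) * (w i - w (i+1)) ≤ 0 := Finset.sum_nonpos t4
  have e2 : u 0 * w 0 ≤ 0 := P1 _ _ (hzval 0)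
  have e3 : u N * w N ≤ 0 := P1 _ _ (hzval N)
  rw [Bg_slot] at hB
  -- all relevant slots vanish
  have he2 : u 0 * w 0 = 0 := by linarith
  have he3 : u N * w N = 0 := by linarith
  have hs4 : ∑ i ∈ range N, (u i - u (i+1)) * (w i - w (i+1)) = 0 := by linarith
  have ht4 : ∀ i ∈ range N, (u i - u (i+1)) * (w i - w (i+1)) = 0 :=
    (Finset.sum_eq_zero_iff_of_nonpos t4).mp hs4
  -- step conditions for u and w
  have hustep : ∀ i, i < N → i + 1 ≠ a → i ≠ b → u i = u (i+1) := by
    intro i hiN h1 h2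
    have hd := ht4 i (mem_range.mpr hiN)
    have e1 := hz i; have e2 := hz (i+1)
    unfold ind at e1 e2
    have hzd : (w i - w (i+1)) = -(u i - u (i+1)) := by split_ifs at e1 e2 <;> omega
    rw [hzd, mul_neg] at hd
    have := mul_self_eq_zero.mp (neg_eq_zero.mp hd); omega
  have hwstep : ∀ i, i < N → i + 1 ≠ a → i ≠ b → w i = w (i+1) := by
    intro i hiN h1 h2
    have hd := ht4 i (mem_range.mpr hiN)
    have e1 := hz i; have e2 := hz (i+1)
    unfold ind at e1 e2
    have hzd : (u i - u (i+1)) = -(w i - w (i+1)) := by split_ifs at e1 e2 <;> omega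
    rw [hzd, neg_mul] at hd
    have := mul_self_eq_zero.mp (neg_eq_zero.mp hd); omega
  -- boundary conditions
  have hz00 : 1 ≤ a → u 0 = 0 ∧ w 0 = 0 := by
    intro ha
    have hz0 : u 0 + w 0 = 0 := by
      have := hz 0; unfold ind at this; split_ifs at this <;> omega
    rcases mul_eq_zero.mp he2 with h | h <;> constructor <;> omega
  have hzNN : b < N → u N = 0 ∧ w N = 0 := by
    intro hb
    have hzN : u N + w N = 0 := by
      have := hz N; unfold ind at this; split_ifs at this <;> omega
    rcases mul_eq_zero.mp he3 with h | h <;> constructor <;> omega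
  have hu00 : 1 ≤ a → u 0 = 0 := fun ha => (hz00 ha).1
  have hw00 : 1 ≤ a → w 0 = 0 := fun ha => (hz00 ha).2
  have huNN : b < N → u N = 0 := fun hb => (hzNN hb).1
  have hwNN : b < N → w N = 0 := fun hb => (hzNN hb).2
  -- u a ∈ {0, ε}
  have hza : u a + w a = ε := by
    have := hz a; unfold ind at this
    rw [if_pos ⟨le_refl a, hab⟩] at this; omega
  have hua : u a = 0 ∨ u a = ε := by
    rcases Nat.eq_zero_or_pos a with ha0 | ha0
    · have h0a : (0:ℕ) = a := ha0.symm
      rw [← h0a] at hza ⊢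
      exact P2 _ _ _ he2 hza
    · -- u (a-1) = u 0 = 0, w (a-1) = 0, and the difference slot at a-1
      have hu0' : u 0 = 0 := hu00 ha0
      have hw0' : w 0 = 0 := hw00 ha0
      have hua1 : u 0 = u (a-1) := const_of_steps u 0 (a-1) (by omega)
        (fun t ht ht' => hustep t (by omega) (by omega) (by omega))
      have hwa1 : w 0 = w (a-1) := const_of_steps w 0 (a-1) (by omega)
        (fun t ht ht' => hwstep t (by omega) (by omega) (by omega))
      have hd := ht4 (a-1) (mem_range.mpr (by omega))
      have ha1 : a - 1 + 1 = a := by omega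
      rw [ha1] at hd
      have hu1 : u (a-1) = 0 := by omega
      have hw1 : w (a-1) = 0 := by omega
      rw [hu1, hw1] at hd
      have hprod : u a * w a = 0 := by
        have : (0 - u a) * (0 - w a) = u a * w a := by ring
        rw [this] at hd; exact hd
      exact P2 _ _ _ hprod hza
  rcases hua with hua | hua
  · -- then u ≡ 0
    have := vanish N a b u hab hbN hu_out hustep hu00 huNN hua
    obtain ⟨i, hi⟩ := hu0; exact hi (this i)
  · -- then w a = 0, so w ≡ 0
    have hwa : w a = 0 := by
      have := hz a; unfold ind at this
      rw [if_pos ⟨le_refl a, hab⟩] at this; omega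
    have := vanish N a b w hab hbN hw_out hwstep hw00 hwNN hwa
    obtain ⟨i, hi⟩ := hw0; exact hi (this i)


lemma Bg_neg_neg (g : ℕ → ℤ) (N : ℕ) (u w : ℕ → ℤ) :
    Bg g N (fun i => -u i) (fun i => -w i) = Bg g N u w := by
  unfold Bg
  congr 1
  · exact Finset.sum_congr rfl (fun i _ => by ring)
  · exact Finset.sum_congr rfl (fun i _ => by ring)

/-- reducibility construction, nonnegative case -/
lemma abs_red_nonneg (g : ℕ → ℤ) (N : ℕ) (hg : ∀ i, i ≤ N → 2 ≤ g i)
    (z : ℕ → ℤ) (hz_out : ∀ i, N < i → z i = 0) (hz0 : ∃ i, z i ≠ 0)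
    (hpos : ∀ i, 0 ≤ z i)
    (hni : ¬ ∃ a b : ℕ, a ≤ b ∧ b ≤ N ∧
      ((∀ i, z i = ind a b i) ∨ (∀ i, z i = -ind a b i))) :
    ∃ u w : ℕ → ℤ, (∀ i, N < i → u i = 0) ∧ (∀ i, N < i → w i = 0) ∧
      (∀ i, z i = u i + w i) ∧ (∃ i, u i ≠ 0) ∧ (∃ i, w i ≠ 0) ∧ 0 ≤ Bg g N u w := by
  classical
  -- support bounds
  set S : Finset ℕ := (range (N+1)).filter (fun i => z i ≠ 0) with hS
  have hSne : S.Nonempty := by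
    obtain ⟨i, hi⟩ := hz0
    have hiN : i ≤ N := by by_contra hc; exact hi (hz_out i (by omega))
    exact ⟨i, by simp [hS, mem_filter, mem_range]; exact ⟨by omega, hi⟩⟩
  set a := S.min' hSne with ha
  set b := S.max' hSne with hb
  have haS : a ∈ S := S.min'_mem hSne
  have hbS : b ∈ S := S.max'_mem hSne
  have hza : z a ≠ 0 := (mem_filter.mp haS).2
  have hzb : z b ≠ 0 := (mem_filter.mp hbS).2
  have hab : a ≤ b := S.min'_le b hbS
  have hbN : b ≤ N := by have := (mem_filter.mp hbS).1; simp [mem_range] at this; omega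
  have hlow : ∀ i, i < a → z i = 0 := by
    intro i hi
    by_contra hc
    have hiS : i ∈ S := mem_filter.mpr ⟨mem_range.mpr (by
      have : a ≤ N := by have := (mem_filter.mp haS).1; simp [mem_range] at this; omega
      omega), hc⟩
    have := S.min'_le i hiS; omega
  have hhigh : ∀ i, b < i → z i = 0 := by
    intro i hi
    rcases le_or_gt i N with hiN | hiN
    · by_contra hc
      have hiS : i ∈ S := mem_filter.mpr ⟨mem_range.mpr (by omega), hc⟩
      have := S.le_max' i hiS; omega
    · exact hz_out i hiN
  by_cases hgap : ∃ gp, a < gp ∧ gp < b ∧ z gp = 0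
  · -- split at the gap
    obtain ⟨gp, hg1, hg2, hg3⟩ := hgap
    refine ⟨fun i => if i ≤ gp then z i else 0, fun i => if i ≤ gp then 0 else z i,
      ?_, ?_, ?_, ⟨a, ?_⟩, ⟨b, ?_⟩, ?_⟩
    · intro i hi; dsimp only; rw [hz_out i hi]; split_ifs <;> rfl
    · intro i hi; dsimp only; rw [hz_out i hi]; split_ifs <;> rfl
    · intro i; dsimp only; split_ifs <;> ring
    · dsimp only; rw [if_pos (by omega : a ≤ gp)]; exact hza
    · dsimp only; rw [if_neg (by omega : ¬ b ≤ gp)]; exact hzb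
    · have hB : Bg g N (fun i => if i ≤ gp then z i else 0) (fun i => if i ≤ gp then 0 else z i) = 0 := by
        unfold Bg
        have h1 : ∀ i ∈ range (N+1),
            g i * (if i ≤ gp then z i else 0) * (if i ≤ gp then 0 else z i) = 0 := by
          intro i _; split_ifs <;> ring
        have h2 : ∀ i ∈ range N,
            ((if i ≤ gp then z i else 0) * (if i + 1 ≤ gp then 0 else z (i+1))
             + (if i + 1 ≤ gp then z (i+1) else 0) * (if i ≤ gp then 0 else z i)) = 0 := by
          intro i _
          rcases lt_trichotomy i gp with hc | hc | hc
          · rcases le_or_gt (i+1) gp with hd | hd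
            · rw [if_pos (by omega : i ≤ gp), if_pos hd, if_pos hd, if_pos (by omega : i ≤ gp)]; ring
            · have hieq : i = gp := by omega
              rw [if_pos (by omega : i ≤ gp), if_neg (by omega : ¬ i+1 ≤ gp),
                if_neg (by omega : ¬ i+1 ≤ gp), if_pos (by omega : i ≤ gp), hieq, hg3]; ring
          · rw [if_pos (by omega : i ≤ gp), if_neg (by omega : ¬ i+1 ≤ gp),
              if_neg (by omega : ¬ i+1 ≤ gp), if_pos (by omega : i ≤ gp), hc, hg3]; ring
          · rw [if_neg (by omega : ¬ i ≤ gp), if_neg (by omega : ¬ i+1 ≤ gp),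
              if_neg (by omega : ¬ i+1 ≤ gp), if_neg (by omega : ¬ i ≤ gp)]; ring
        rw [Finset.sum_congr rfl h1, Finset.sum_congr rfl h2]
        simp
      rw [hB]
  · push_neg at hgap
    have hmid : ∀ i, a ≤ i → i ≤ b → 1 ≤ z i := by
      intro i h1 h2
      have h0 := hpos i
      rcases Nat.lt_or_ge a i with h1' | h1'
      · rcases Nat.lt_or_ge i b with h2' | h2'
        · have := hgap i h1' h2'; omega
        · have : z i ≠ 0 := by rw [show i = b from by omega]; exact hzb
          omega
      · have : z i ≠ 0 := by rw [show i = a from by omega]; exact hza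
        omega
    by_cases hbig : ∃ i0, 2 ≤ z i0
    · obtain ⟨i0, hi0⟩ := hbig
      have hi0a : a ≤ i0 := by
        by_contra hc; push_neg at hc; have := hlow i0 hc; omega
      have hi0b : i0 ≤ b := by
        by_contra hc; push_neg at hc; have := hhigh i0 hc; omega
      have houtz : ∀ i, i < a ∨ b < i → z i = 0 := by
        intro i hi
        rcases hi with hi | hi
        · exact hlow i hi
        · exact hhigh i hi
      refine ⟨fun i => ind a b i, fun i => z i - ind a b i, ?_, ?_, ?_, ⟨a, ?_⟩, ⟨i0, ?_⟩, ?_⟩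
      · intro i hi; simp only [ind]; rw [if_neg (by omega : ¬ (a ≤ i ∧ i ≤ b))]
      · intro i hi; simp only [ind]
        rw [if_neg (by omega : ¬ (a ≤ i ∧ i ≤ b)), hz_out i hi]; ring
      · intro i; dsimp only; ring
      · simp only [ind]; rw [if_pos ⟨le_refl _, hab⟩]; omega
      · simp only [ind]; rw [if_pos (⟨hi0a, hi0b⟩ : a ≤ i0 ∧ i0 ≤ b)]; omega
      · -- nonnegativity of every slot term
        have hw : ∀ i, 0 ≤ z i - ind a b i := by
          intro i; simp only [ind]; split_ifs with hi
          · have := hmid i hi.1 hi.2; omega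
          · have : z i = 0 := houtz i (by omega)
            omega
        have hind01 : ∀ i, 0 ≤ ind a b i ∧ ind a b i ≤ 1 := by
          intro i; simp only [ind]; split_ifs <;> omega
        rw [Bg_slot]
        have t1 : 0 ≤ ∑ i ∈ range (N+1), (g i - 2) * (ind a b i * (z i - ind a b i)) := by
          apply Finset.sum_nonneg
          intro i hi
          apply mul_nonneg
          · have := hg i (by simp [mem_range] at hi; omega); omega
          · exact mul_nonneg (hind01 i).1 (hw i)
        have t4 : 0 ≤ ∑ i ∈ range N, (ind a b i - ind a b (i+1)) * ((z i - ind a b i) - (z (i+1) - ind a b (i+1))) := by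
          apply Finset.sum_nonneg
          intro i _
          simp only [ind]
          rcases lt_trichotomy (i+1) a with h1 | h1 | h1
          · rw [if_neg (by omega : ¬ (a ≤ i ∧ i ≤ b)), if_neg (by omega : ¬ (a ≤ i+1 ∧ i+1 ≤ b))]
            simp
          · -- i + 1 = a : jump up
            rw [if_neg (by omega : ¬ (a ≤ i ∧ i ≤ b)), if_pos (by omega : a ≤ i+1 ∧ i+1 ≤ b)]
            have hz1 : z i = 0 := hlow i (by omega)
            have hz2 : 1 ≤ z (i+1) := hmid (i+1) (by omega) (by omega)
            rw [hz1]; nlinarith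
          · rcases lt_trichotomy i b with h2 | h2 | h2
            · rw [if_pos (by omega : a ≤ i ∧ i ≤ b), if_pos (by omega : a ≤ i+1 ∧ i+1 ≤ b)]
              simp
            · -- i = b : jump down
              rw [if_pos (by omega : a ≤ i ∧ i ≤ b), if_neg (by omega : ¬ (a ≤ i+1 ∧ i+1 ≤ b))]
              have hz1 : z (i+1) = 0 := hhigh (i+1) (by omega)
              have hz2 : 1 ≤ z i := hmid i (by omega) (by omega)
              rw [hz1]; nlinarith
            · rw [if_neg (by omega : ¬ (a ≤ i ∧ i ≤ b)), if_neg (by omega : ¬ (a ≤ i+1 ∧ i+1 ≤ b))]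
              simp
        have t2 : 0 ≤ ind a b 0 * (z 0 - ind a b 0) := mul_nonneg (hind01 0).1 (hw 0)
        have t3 : 0 ≤ ind a b N * (z N - ind a b N) := mul_nonneg (hind01 N).1 (hw N)
        linarith
    · -- all values ≤ 1 : z is an interval indicator, contradiction
      exfalso
      push_neg at hbig
      apply hni
      refine ⟨a, b, hab, hbN, Or.inl ?_⟩
      intro i
      simp only [ind]; split_ifs with hi
      · have h1 := hmid i hi.1 hi.2; have h2 := hbig i; omega
      · rcases le_or_gt i b with h1 | h1
        · rcases le_or_gt a i with h2 | h2
          · exact absurd ⟨h2, h1⟩ hi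
          · exact hlow i h2
        · exact hhigh i h1

/-- reducibility construction -/
lemma abs_red (g : ℕ → ℤ) (N : ℕ) (hg : ∀ i, i ≤ N → 2 ≤ g i)
    (z : ℕ → ℤ) (hz_out : ∀ i, N < i → z i = 0) (hz0 : ∃ i, z i ≠ 0)
    (hni : ¬ ∃ a b : ℕ, a ≤ b ∧ b ≤ N ∧
      ((∀ i, z i = ind a b i) ∨ (∀ i, z i = -ind a b i))) :
    ∃ u w : ℕ → ℤ, (∀ i, N < i → u i = 0) ∧ (∀ i, N < i → w i = 0) ∧
      (∀ i, z i = u i + w i) ∧ (∃ i, u i ≠ 0) ∧ (∃ i, w i ≠ 0) ∧ 0 ≤ Bg g N u w := by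
  classical
  by_cases hmix : (∃ i, 0 < z i) ∧ (∃ j, z j < 0)
  · obtain ⟨⟨i1, hi1⟩, ⟨j1, hj1⟩⟩ := hmix
    refine ⟨fun i => max (z i) 0, fun i => min (z i) 0, ?_, ?_, ?_, ⟨i1, ?_⟩, ⟨j1, ?_⟩, ?_⟩
    · intro i hi; dsimp only; rw [hz_out i hi]; simp
    · intro i hi; dsimp only; rw [hz_out i hi]; simp
    · intro i; dsimp only; omega
    · dsimp only; omega
    · dsimp only; omega
    · unfold Bg
      have h1 : ∀ i ∈ range (N+1), g i * max (z i) 0 * min (z i) 0 = 0 := by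
        intro i _
        rcases le_or_gt (z i) 0 with hc | hc
        · rw [max_eq_right hc]; ring
        · rw [min_eq_right (by omega : (0:ℤ) ≤ z i)]; ring
      rw [Finset.sum_congr rfl h1]
      have h2 : ∑ i ∈ range N, (max (z i) 0 * min (z (i+1)) 0 + max (z (i+1)) 0 * min (z i) 0) ≤ 0 := by
        apply Finset.sum_nonpos
        intro i _
        have a1 : max (z i) 0 * min (z (i+1)) 0 ≤ 0 :=
          mul_nonpos_of_nonneg_of_nonpos (le_max_right _ _) (min_le_right _ _)
        have a2 : max (z (i+1)) 0 * min (z i) 0 ≤ 0 :=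
          mul_nonpos_of_nonneg_of_nonpos (le_max_right _ _) (min_le_right _ _)
        linarith
      simp
      linarith
  · have hsplit : (∀ i, z i ≤ 0) ∨ (∀ i, 0 ≤ z i) := by
      by_cases hex : ∃ i, 0 < z i
      · right; intro j
        by_contra hc
        exact hmix ⟨hex, ⟨j, by omega⟩⟩
      · left; intro i
        push_neg at hex; exact hex i
    rcases hsplit with hneg | hpos
    · -- apply the nonneg case to -z
      have := abs_red_nonneg g N hg (fun i => -z i)
        (fun i hi => by rw [hz_out i hi]; ring)
        (by obtain ⟨i, hi⟩ := hz0; exact ⟨i, by simpa using hi⟩)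
        (fun i => by have := hneg i; omega)
        (by
          intro ⟨a, b, h1, h2, h3⟩
          apply hni
          refine ⟨a, b, h1, h2, ?_⟩
          rcases h3 with h3 | h3
          · right; intro i; have := h3 i; omega
          · left; intro i; have := h3 i; omega)
      obtain ⟨u, w, e1, e2, e3, e4, e5, e6⟩ := this
      refine ⟨fun i => -u i, fun i => -w i, ?_, ?_, ?_, ?_, ?_, ?_⟩
      · intro i hi; dsimp only; rw [e1 i hi]; ring
      · intro i hi; dsimp only; rw [e2 i hi]; ring
      · intro i; have := e3 i; dsimp only at this ⊢; omega
      · obtain ⟨i, hi⟩ := e4; exact ⟨i, by dsimp only; simpa using hi⟩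
      · obtain ⟨i, hi⟩ := e5; exact ⟨i, by dsimp only; simpa using hi⟩
      · rw [Bg_neg_neg]; exact e6
    · exact abs_red_nonneg g N hg z hz_out hz0 hpos hni

end CM916

namespace CM916

/-- the sorted enumeration of `Mset` (1-indexed) -/
def kk (s l : ℕ) (m : ℕ → ℕ) (i : ℕ) : ℕ := ((Mset s l m).sort (· ≤ ·)).getD (i - 1) 0

/-- right endpoint of the `i`-th chain -/
def Kk (s l : ℕ) (m : ℕ → ℕ) (i : ℕ) : ℕ :=
  if i = 0 then minM s l m else nxt s l m (kk s l m i)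

/-- the diagonal of the Gram matrix -/
def gg (s l : ℕ) (m : ℕ → ℕ) (i : ℕ) : ℤ :=
  if i = 0 then (minM s l m : ℤ) + 1 else (Kk s l m i : ℤ) - (kk s l m i : ℤ) + 1

/-- structural context extracted from `IsCMLattice` -/
structure Ctx (s l : ℕ) (m : ℕ → ℕ) : Prop where
  hl : 1 ≤ l
  hm0 : m 0 = 0
  hsml : s = m l
  hstep : ∀ k, 1 ≤ k → k ≤ l → m (k-1) < m k

variable {s l : ℕ} {m : ℕ → ℕ}

lemma mem_Mset' {j : ℕ} : j ∈ Mset s l m ↔ (j ≤ s ∧ ∀ k, k ≤ l → j ≠ m k) := by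
  simp [Mset, mem_filter, mem_range]

lemma Ctx.m_mono (hc : Ctx s l m) : ∀ k1 k2, k1 ≤ k2 → k2 ≤ l → m k1 ≤ m k2 := by
  intro k1 k2 h12 h2l
  induction k2, h12 using Nat.le_induction with
  | base => exact le_refl _
  | succ k2 h12 ih =>
      have h1 := hc.hstep (k2+1) (by omega) h2l
      have h2 := ih (by omega)
      simp only [Nat.add_sub_cancel] at h1
      omega

lemma Ctx.m_strict (hc : Ctx s l m) : ∀ k1 k2, k1 < k2 → k2 ≤ l → m k1 < m k2 := by
  intro k1 k2 h12 h2l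
  have h1 := hc.hstep k2 (by omega) h2l
  have h2 := hc.m_mono k1 (k2-1) (by omega) (by omega)
  omega

lemma Ctx.m_le_s (hc : Ctx s l m) : ∀ k, k ≤ l → m k ≤ s := by
  intro k hk; rw [hc.hsml]; exact hc.m_mono k l hk (le_refl _)

lemma Ctx.hs1 (hc : Ctx s l m) : 1 ≤ s := by
  have := hc.m_strict 0 l hc.hl (le_refl _)
  rw [hc.hm0] at this; rw [hc.hsml]; omega

lemma Ctx.node_not_Mset (hc : Ctx s l m) {k : ℕ} (hk : k ≤ l) : m k ∉ Mset s l m := by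
  intro hmem
  exact ((mem_Mset'.mp hmem).2 k hk) rfl

lemma Ctx.interior_M (hc : Ctx s l m) {k j : ℕ} (hk1 : 1 ≤ k) (hkl : k ≤ l)
    (h1 : m (k-1) < j) (h2 : j < m k) : j ∈ Mset s l m := by
  rw [mem_Mset']
  constructor
  · have := hc.m_le_s k hkl; omega
  · intro k' hk' hne
    rcases le_or_gt k' (k-1) with hle | hlt
    · have := hc.m_mono k' (k-1) hle (by omega); omega
    · have := hc.m_mono k k' (by omega) hk'; omega

section SortedFacts

variable {s l : ℕ} {m : ℕ → ℕ}

lemma kk_getElem (i : ℕ) (h1 : 1 ≤ i) (h2 : i ≤ (Mset s l m).card) :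
    kk s l m i = ((Mset s l m).sort (· ≤ ·))[i-1]'(by
      rw [Finset.length_sort]; omega) := by
  unfold kk
  exact List.getD_eq_getElem _ 0 _

lemma kk_mem (i : ℕ) (h1 : 1 ≤ i) (h2 : i ≤ (Mset s l m).card) :
    kk s l m i ∈ Mset s l m := by
  rw [kk_getElem i h1 h2]
  rw [← Finset.mem_sort (α := ℕ) (· ≤ ·)]
  exact List.getElem_mem _

lemma kk_strict (i j : ℕ) (h1 : 1 ≤ i) (hij : i < j) (hj : j ≤ (Mset s l m).card) :
    kk s l m i < kk s l m j := by
  rw [kk_getElem i h1 (by omega), kk_getElem j (by omega) hj]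
  have hsorted : ((Mset s l m).sort (· ≤ ·)).Pairwise (· < ·) := (Finset.sortedLT_sort _).pairwise
  exact List.pairwise_iff_getElem.mp hsorted _ _ _ _ (by omega)

lemma kk_mono (i j : ℕ) (h1 : 1 ≤ i) (hij : i ≤ j) (hj : j ≤ (Mset s l m).card) :
    kk s l m i ≤ kk s l m j := by
  rcases eq_or_lt_of_le hij with rfl | hlt
  · exact le_refl _
  · exact le_of_lt (kk_strict i j h1 hlt hj)

lemma kk_surj (j : ℕ) (hj : j ∈ Mset s l m) :
    ∃ i, 1 ≤ i ∧ i ≤ (Mset s l m).card ∧ kk s l m i = j := by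
  have hj' : j ∈ (Mset s l m).sort (· ≤ ·) := (Finset.mem_sort _).mpr hj
  obtain ⟨n, hn, hval⟩ := List.mem_iff_getElem.mp hj'
  rw [Finset.length_sort] at hn
  refine ⟨n+1, by omega, by omega, ?_⟩
  rw [kk_getElem (n+1) (by omega) (by omega)]
  simpa using hval

lemma kk_reflect (i j : ℕ) (h1 : 1 ≤ i) (h1' : 1 ≤ j) (hi : i ≤ (Mset s l m).card)
    (hj : j ≤ (Mset s l m).card) (hlt : kk s l m i < kk s l m j) : i < j := by
  by_contra hcon
  push_neg at hcon
  have := kk_mono j i h1' hcon hi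
  omega

lemma Mset_nonempty_of (i : ℕ) (h1 : 1 ≤ i) (h2 : i ≤ (Mset s l m).card) :
    (Mset s l m).Nonempty := Finset.card_pos.mp (by omega)

lemma minM_le (j : ℕ) (hj : j ∈ Mset s l m) : minM s l m ≤ j := by
  unfold minM
  rw [dif_pos ⟨j, hj⟩]
  exact Finset.min'_le _ _ hj

lemma minM_eq_kk1 (hN : 0 < (Mset s l m).card) : minM s l m = kk s l m 1 := by
  have hne : (Mset s l m).Nonempty := Finset.card_pos.mp hN
  have h1 : minM s l m ≤ kk s l m 1 := minM_le _ (kk_mem 1 (by omega) hN)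
  have h2 : kk s l m 1 ≤ minM s l m := by
    obtain ⟨i, hi1, hi2, hival⟩ := kk_surj ((Mset s l m).min' hne) (Finset.min'_mem _ hne)
    have : kk s l m 1 ≤ kk s l m i := kk_mono 1 i (le_refl _) hi1 hi2
    unfold minM; rw [dif_pos hne]; omega
  omega

lemma Mgap (i j : ℕ) (h1 : 1 ≤ i) (hj : j ∈ Mset s l m)
    (hlt : kk s l m i < j) : Kk s l m i ≤ j := by
  unfold Kk nxt
  rw [if_neg (by omega : ¬ i = 0)]
  have hjf : j ∈ (Mset s l m).filter (fun j' => kk s l m i < j') :=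
    mem_filter.mpr ⟨hj, hlt⟩
  rw [dif_pos ⟨j, hjf⟩]
  exact Finset.min'_le _ _ hjf

lemma Kk_eq (i : ℕ) (h1 : 1 ≤ i) (h2 : i < (Mset s l m).card) :
    Kk s l m i = kk s l m (i+1) := by
  have hmem : kk s l m (i+1) ∈ Mset s l m := kk_mem (i+1) (by omega) (by omega)
  have hlt : kk s l m i < kk s l m (i+1) := kk_strict i (i+1) h1 (by omega) (by omega)
  have hle : Kk s l m i ≤ kk s l m (i+1) := Mgap i _ h1 hmem hlt
  have hge : kk s l m (i+1) ≤ Kk s l m i := by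
    unfold Kk nxt
    rw [if_neg (by omega : ¬ i = 0)]
    have hne : ((Mset s l m).filter (fun j' => kk s l m i < j')).Nonempty :=
      ⟨kk s l m (i+1), mem_filter.mpr ⟨hmem, hlt⟩⟩
    rw [dif_pos hne]
    apply Finset.le_min'
    intro y hy
    obtain ⟨hy1, hy2⟩ := mem_filter.mp hy
    obtain ⟨i', hi'1, hi'2, rfl⟩ := kk_surj y hy1
    have : i < i' := kk_reflect i i' h1 hi'1 (by omega) hi'2 hy2
    exact kk_mono (i+1) i' (by omega) (by omega) hi'2
  omega

lemma Kk_last (hN : 0 < (Mset s l m).card) (hc : Ctx s l m) :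
    Kk s l m (Mset s l m).card = s := by
  unfold Kk nxt
  rw [if_neg (by omega : ¬ (Mset s l m).card = 0)]
  rw [dif_neg]
  intro ⟨y, hy⟩
  obtain ⟨hy1, hy2⟩ := mem_filter.mp hy
  obtain ⟨i', hi'1, hi'2, rfl⟩ := kk_surj y hy1
  have := kk_mono i' (Mset s l m).card hi'1 hi'2 (le_refl _)
  omega

lemma kk_pos (hc : Ctx s l m) (i : ℕ) (h1 : 1 ≤ i) (h2 : i ≤ (Mset s l m).card) :
    1 ≤ kk s l m i := by
  have hmem := kk_mem (s := s) (l := l) (m := m) i h1 h2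
  have h0 : (0:ℕ) ∉ Mset s l m := by
    have h00 := hc.node_not_Mset (k := 0) (by omega)
    rwa [hc.hm0] at h00
  by_contra hcon
  push_neg at hcon
  have h' : kk s l m i = 0 := by omega
  rw [h'] at hmem
  exact h0 hmem

lemma kk_lt_s (hc : Ctx s l m) (i : ℕ) (h1 : 1 ≤ i) (h2 : i ≤ (Mset s l m).card) :
    kk s l m i < s := by
  have hmem := kk_mem (s := s) (l := l) (m := m) i h1 h2
  have hle := (mem_Mset'.mp hmem).1
  have hne : kk s l m i ≠ s := by
    intro hcon
    have := hc.node_not_Mset (k := l) (le_refl _)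
    rw [← hc.hsml] at this
    rw [hcon] at hmem
    exact this hmem
  omega

lemma minM_pos (hc : Ctx s l m) : 1 ≤ minM s l m := by
  unfold minM
  split_ifs with h
  · have hmem := Finset.min'_mem _ h
    have h0 : (0:ℕ) ∉ Mset s l m := by
      have h00 := hc.node_not_Mset (k := 0) (by omega)
      rwa [hc.hm0] at h00
    by_contra hcon
    push_neg at hcon
    have h' : (Mset s l m).min' h = 0 := by omega
    rw [h'] at hmem
    exact h0 hmem
  · exact hc.hs1

lemma minM_le_s (hc : Ctx s l m) : minM s l m ≤ s := by
  unfold minM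
  split_ifs with h
  · exact (mem_Mset'.mp (Finset.min'_mem _ h)).1
  · exact le_refl _

lemma minM_lt_s (hc : Ctx s l m) (hN : 0 < (Mset s l m).card) : minM s l m < s := by
  rw [minM_eq_kk1 hN]
  exact kk_lt_s hc 1 (le_refl _) hN

lemma kk_lt_Kk (hc : Ctx s l m) (i : ℕ) (h1 : 1 ≤ i) (h2 : i ≤ (Mset s l m).card) :
    kk s l m i < Kk s l m i := by
  rcases lt_or_eq_of_le h2 with hlt | heq
  · rw [Kk_eq i h1 hlt]
    exact kk_strict i (i+1) h1 (by omega) (by omega)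
  · rw [heq, Kk_last (by omega) hc]
    rw [← heq]
    exact kk_lt_s hc i h1 h2

lemma Kk_le_s (hc : Ctx s l m) (i : ℕ) (h2 : i ≤ (Mset s l m).card) :
    Kk s l m i ≤ s := by
  rcases Nat.eq_zero_or_pos i with rfl | h1
  · unfold Kk; rw [if_pos rfl]; exact minM_le_s hc
  rcases lt_or_eq_of_le h2 with hlt | heq
  · rw [Kk_eq i h1 hlt]
    exact (mem_Mset'.mp (kk_mem (i+1) (by omega) (by omega))).1
  · rw [heq, Kk_last (by omega) hc]

lemma gg2 (hc : Ctx s l m) (i : ℕ) (h2 : i ≤ (Mset s l m).card) :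
    2 ≤ gg s l m i := by
  unfold gg
  split_ifs with h
  · have := minM_pos hc; omega
  · have := kk_lt_Kk hc i (by omega) h2; omega

lemma INT0 (hc : Ctx s l m) (k : ℕ) (hk1 : 1 ≤ k) (hkl : k ≤ l) :
    min (m k) (minM s l m) ≤ m (k-1) + 1 := by
  by_contra hcon
  push_neg at hcon
  have hx : m (k-1) + 1 ∈ Mset s l m :=
    hc.interior_M hk1 hkl (by omega) (by omega)
  have := minM_le _ hx
  omega

lemma INTi (hc : Ctx s l m) (i k : ℕ) (hi1 : 1 ≤ i) (hi2 : i ≤ (Mset s l m).card)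
    (hk1 : 1 ≤ k) (hkl : k ≤ l) :
    min (m k) (Kk s l m i) ≤ max (m (k-1)) (kk s l m i) + 1 := by
  by_contra hcon
  push_neg at hcon
  have h1 : m (k-1) < max (m (k-1)) (kk s l m i) + 1 := by omega
  have h2 : max (m (k-1)) (kk s l m i) + 1 < m k := by omega
  have hx : max (m (k-1)) (kk s l m i) + 1 ∈ Mset s l m :=
    hc.interior_M hk1 hkl h1 h2
  have h3 : kk s l m i < max (m (k-1)) (kk s l m i) + 1 := by omega
  have := Mgap i _ hi1 hx h3
  omega

end SortedFacts


section DotMachinery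

/-- a "chain" function: indicator of `A` plus `ε` times the delta at `c` -/
def chf (c : ℕ) (A : Finset ℕ) (ε : ℤ) : ℕ → ℤ :=
  fun j => (if j ∈ A then (1:ℤ) else 0) + ε * (if j = c then 1 else 0)

lemma sum_ind_ind (M : ℕ) (A A' : Finset ℕ) (hA : A ⊆ range M) :
    ∑ j ∈ range M, (if j ∈ A then (1:ℤ) else 0) * (if j ∈ A' then 1 else 0)
      = ((A ∩ A').card : ℤ) := by
  have h1 : ∀ j ∈ range M, (if j ∈ A then (1:ℤ) else 0) * (if j ∈ A' then 1 else 0)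
      = (if j ∈ A ∩ A' then (1:ℤ) else 0) := by
    intro j _
    by_cases h1 : j ∈ A <;> by_cases h2 : j ∈ A' <;> simp [h1, h2, Finset.mem_inter]
  rw [Finset.sum_congr rfl h1, Finset.sum_ite_mem]
  have h2 : range M ∩ (A ∩ A') = A ∩ A' := by
    apply Finset.inter_eq_right.mpr
    exact (Finset.inter_subset_left).trans hA
  rw [h2]
  simp

lemma sum_delta_ind (M c : ℕ) (A' : Finset ℕ) (hc : c < M) :
    ∑ j ∈ range M, (if j = c then (1:ℤ) else 0) * (if j ∈ A' then 1 else 0)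
      = (if c ∈ A' then 1 else 0) := by
  have h1 : ∀ j ∈ range M, (if j = c then (1:ℤ) else 0) * (if j ∈ A' then 1 else 0)
      = (if j = c then (if j ∈ A' then (1:ℤ) else 0) else 0) := by
    intro j _; by_cases h : j = c <;> simp [h]
  rw [Finset.sum_congr rfl h1, Finset.sum_ite_eq' (range M) c]
  simp [mem_range.mpr hc]

lemma sum_ind_delta (M c' : ℕ) (A : Finset ℕ) (hc : c' < M) :
    ∑ j ∈ range M, (if j ∈ A then (1:ℤ) else 0) * (if j = c' then 1 else 0)
      = (if c' ∈ A then 1 else 0) := by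
  have h1 : ∀ j ∈ range M, (if j ∈ A then (1:ℤ) else 0) * (if j = c' then 1 else 0)
      = (if j = c' then (if j ∈ A then (1:ℤ) else 0) else 0) := by
    intro j _; by_cases h : j = c' <;> simp [h]
  rw [Finset.sum_congr rfl h1, Finset.sum_ite_eq' (range M) c']
  simp [mem_range.mpr hc]

lemma sum_delta_delta (M c c' : ℕ) (hc : c < M) :
    ∑ j ∈ range M, (if j = c then (1:ℤ) else 0) * (if j = c' then 1 else 0)
      = (if c = c' then 1 else 0) := by
  have h1 : ∀ j ∈ range M, (if j = c then (1:ℤ) else 0) * (if j = c' then 1 else 0)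
      = (if j = c then (if c = c' then (1:ℤ) else 0) else 0) := by
    intro j _
    by_cases h : j = c
    · subst h; simp
    · simp [h]
  rw [Finset.sum_congr rfl h1, Finset.sum_ite_eq' (range M) c]
  simp [mem_range.mpr hc]

lemma sum_chf (M : ℕ) (A A' : Finset ℕ) (c c' : ℕ) (ε ε' : ℤ)
    (hA : A ⊆ range M) (hc : c < M) (hc' : c' < M) :
    ∑ j ∈ range M, chf c A ε j * chf c' A' ε' j
      = ((A ∩ A').card : ℤ) + ε * (if c ∈ A' then 1 else 0)
        + ε' * (if c' ∈ A then 1 else 0) + ε * ε' * (if c = c' then 1 else 0) := by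
  have expand : ∀ j ∈ range M, chf c A ε j * chf c' A' ε' j =
      (if j ∈ A then (1:ℤ) else 0) * (if j ∈ A' then 1 else 0)
      + ε * ((if j = c then (1:ℤ) else 0) * (if j ∈ A' then 1 else 0))
      + (ε' * ((if j ∈ A then (1:ℤ) else 0) * (if j = c' then 1 else 0))
      + ε * ε' * ((if j = c then (1:ℤ) else 0) * (if j = c' then 1 else 0))) := by
    intro j _; unfold chf; ring
  rw [Finset.sum_congr rfl expand]
  rw [Finset.sum_add_distrib, Finset.sum_add_distrib, Finset.sum_add_distrib]
  rw [← Finset.mul_sum, ← Finset.mul_sum, ← Finset.mul_sum]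
  rw [sum_ind_ind M A A' hA, sum_delta_ind M c A' hc, sum_ind_delta M c' A hc',
    sum_delta_delta M c c' hc]
  ring

lemma IocIoc_card (a b c d : ℕ) :
    ((Finset.Ioc a b) ∩ (Finset.Ioc c d)).card = min b d - max a c := by
  have h : (Finset.Ioc a b) ∩ (Finset.Ioc c d) = Finset.Ioc (max a c) (min b d) := by
    ext j; simp [Finset.mem_Ioc, Finset.mem_inter]; omega
  rw [h, Nat.card_Ioc]

lemma IccIoc_card (b c d : ℕ) :
    ((Finset.Icc 0 b) ∩ (Finset.Ioc c d)).card = min b d - c := by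
  have h : (Finset.Icc 0 b) ∩ (Finset.Ioc c d) = Finset.Ioc c (min b d) := by
    ext j; simp [Finset.mem_Ioc, Finset.mem_Icc, Finset.mem_inter]; omega
  rw [h, Nat.card_Ioc]

lemma Icc_sub_range (b s : ℕ) (h : b ≤ s) : Finset.Icc 0 b ⊆ range (s+1) := by
  intro j hj; simp [Finset.mem_Icc] at hj; simp [mem_range]; omega

lemma Ioc_sub_range (c d s : ℕ) (h : d ≤ s) : Finset.Ioc c d ⊆ range (s+1) := by
  intro j hj; simp [Finset.mem_Ioc] at hj; simp [mem_range]; omega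

/-- the e-part of `vSeq` as a function on ℕ -/
def VF (s l : ℕ) (m : ℕ → ℕ) (i : ℕ) : ℕ → ℤ :=
  if i = 0 then chf 0 (Finset.Icc 0 (minM s l m)) 0
  else chf (kk s l m i) (Finset.Ioc (kk s l m i) (Kk s l m i)) (-1)

/-- the e-part of `wk` as a function on ℕ -/
def WF (m : ℕ → ℕ) (k : ℕ) : ℕ → ℤ :=
  chf (m (k-1)) (Finset.Ioc (m (k-1)) (m k)) (-1)

lemma vSeq_elim (t s l : ℕ) (m : ℕ → ℕ) (i : ℕ) :
    vSeq t s l m i = Sum.elim (0 : Fin t → ℤ) (fun j : Fin (s+1) => VF s l m i (j:ℕ)) := by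
  unfold vSeq VF
  split_ifs with h
  · funext x
    cases x with
    | inl j => rfl
    | inr j =>
        simp only [v0vec, Sum.elim_inr, chf, Finset.mem_Icc]
        split_ifs <;> simp_all <;> omega
  · funext x
    cases x with
    | inl j => rfl
    | inr j =>
        simp only [vKvec, Sum.elim_inr, chf, Finset.mem_Ioc]
        have hKk : Kk s l m i = nxt s l m (kk s l m i) := by
          unfold Kk; rw [if_neg h]
        have hkk : kk s l m i = ((Mset s l m).sort (· ≤ ·)).getD (i-1) 0 := rfl
        rw [← hkk, ← hKk]
        split_ifs <;> simp_all <;> omega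

lemma wk_elim (t s : ℕ) (m : ℕ → ℕ) (k : ℕ) :
    wk t s m k = Sum.elim (0 : Fin t → ℤ) (fun j : Fin (s+1) => WF m k (j:ℕ)) := by
  funext x
  cases x with
  | inl j => rfl
  | inr j =>
      simp only [wk, WF, Sum.elim_inr, chf, Finset.mem_Ioc]
      split_ifs <;> simp_all <;> omega

lemma dot_elim (t s : ℕ) (X Y : ℕ → ℤ) :
    dot (Sum.elim (0 : Fin t → ℤ) (fun j : Fin (s+1) => X (j:ℕ)))
        (Sum.elim (0 : Fin t → ℤ) (fun j : Fin (s+1) => Y (j:ℕ)))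
      = ∑ j ∈ range (s+1), X j * Y j := by
  rw [dot, Fintype.sum_sum_type]
  simp only [Sum.elim_inl, Sum.elim_inr, Pi.zero_apply, zero_mul, Finset.sum_const_zero, zero_add]
  exact Fin.sum_univ_eq_sum_range (fun j => X j * Y j) (s+1)

end DotMachinery

section Membership

variable {s l : ℕ} {m : ℕ → ℕ}

lemma node_ne_minM (hc : Ctx s l m) (k : ℕ) (hk1 : 1 ≤ k) (hkl : k ≤ l) :
    m (k-1) ≠ minM s l m := by
  unfold minM
  split_ifs with h
  · intro hcon
    have := hc.node_not_Mset (k := k-1) (by omega)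
    rw [hcon] at this
    exact this (Finset.min'_mem _ h)
  · have h1 := hc.hstep k hk1 hkl
    have h2 := hc.m_le_s k hkl
    omega

lemma Kk_ne_node (hc : Ctx s l m) (i k : ℕ) (hi1 : 1 ≤ i) (hi2 : i ≤ (Mset s l m).card)
    (hkl : k ≤ l) (hkltl : k < l) : Kk s l m i ≠ m k := by
  rcases lt_or_eq_of_le hi2 with hlt | heq
  · rw [Kk_eq i hi1 hlt]
    intro hcon
    have := hc.node_not_Mset (k := k) hkl
    rw [← hcon] at this
    exact this (kk_mem (i+1) (by omega) (by omega))
  · rw [heq, Kk_last (by omega) hc]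
    intro hcon
    have := hc.m_strict k l hkltl (le_refl _)
    rw [← hc.hsml, ← hcon] at this
    omega

lemma kk_ne_node (hc : Ctx s l m) (i k : ℕ) (hi1 : 1 ≤ i) (hi2 : i ≤ (Mset s l m).card)
    (hkl : k ≤ l) : kk s l m i ≠ m k := by
  have hmem := kk_mem (s := s) (l := l) (m := m) i hi1 hi2
  exact (mem_Mset'.mp hmem).2 k hkl

lemma vseq_wk_dot (hc : Ctx s l m) (t i k : ℕ) (hi : i ≤ (Mset s l m).card)
    (hk1 : 1 ≤ k) (hkl : k ≤ l) :
    dot (vSeq t s l m i) (wk t s m k) = 0 := by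
  rw [vSeq_elim, wk_elim, dot_elim]
  have hm1 : m (k-1) < m k := hc.hstep k hk1 hkl
  have hms : m k ≤ s := hc.m_le_s k hkl
  unfold VF WF
  split_ifs with h
  · -- i = 0
    rw [sum_chf (s+1) _ _ _ _ _ _ (Icc_sub_range _ _ (minM_le_s hc)) (by omega)
      (by omega : m (k-1) < s + 1)]
    rw [IccIoc_card]
    simp only [Finset.mem_Ioc, Finset.mem_Icc]
    have hINT := INT0 hc k hk1 hkl
    have hne := node_ne_minM hc k hk1 hkl
    split_ifs <;> push_cast <;> omega
  · -- i ≥ 1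
    have hi1 : 1 ≤ i := by omega
    rw [sum_chf (s+1) _ _ _ _ _ _ (Ioc_sub_range _ _ _ (Kk_le_s hc i hi))
      (by have := kk_lt_s hc i hi1 hi; omega) (by omega : m (k-1) < s + 1)]
    rw [IocIoc_card]
    simp only [Finset.mem_Ioc]
    have hINT := INTi hc i k hi1 hi hk1 hkl
    have hne1 : kk s l m i ≠ m (k-1) := kk_ne_node hc i (k-1) hi1 hi (by omega)
    have hne2 : kk s l m i ≠ m k := kk_ne_node hc i k hi1 hi hkl
    have hne3 : Kk s l m i ≠ m (k-1) := by
      rcases lt_or_eq_of_le hkl with hlt | heq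
      · exact Kk_ne_node hc i (k-1) hi1 hi (by omega) (by omega)
      · subst heq
        rcases Nat.eq_zero_or_pos (k-1) with h0 | hpos
        · rw [h0, hc.hm0]
          have := kk_lt_Kk hc i hi1 hi
          have := kk_pos hc i hi1 hi
          omega
        · exact Kk_ne_node hc i (k-1) hi1 hi (by omega) (by omega)
    have hkK := kk_lt_Kk hc i hi1 hi
    split_ifs <;> push_cast <;> omega

lemma vseq_mem_LF (hc : Ctx s l m) (t i : ℕ) (hi : i ≤ (Mset s l m).card) :
    vSeq t s l m i ∈ LFset t s l m := by
  constructor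
  · intro j
    rw [vSeq_elim]
    rfl
  · intro k hk1 hkl
    exact vseq_wk_dot hc t i k hi hk1 hkl

end Membership


section Gram

variable {s l : ℕ} {m : ℕ → ℕ}

lemma dot_comm {ι : Type*} [Fintype ι] (x y : ι → ℤ) : dot x y = dot y x := by
  unfold dot; exact Finset.sum_congr rfl (fun i _ => mul_comm _ _)

lemma gram_diag (hc : Ctx s l m) (t i : ℕ) (hi : i ≤ (Mset s l m).card) :
    dot (vSeq t s l m i) (vSeq t s l m i) = gg s l m i := by
  rw [vSeq_elim, dot_elim]
  unfold VF gg
  split_ifs with h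
  · rw [sum_chf (s+1) _ _ _ _ _ _ (Icc_sub_range _ _ (minM_le_s hc)) (by omega) (by omega)]
    rw [Finset.inter_self, Nat.card_Icc]
    simp
  · have hi1 : 1 ≤ i := by omega
    rw [sum_chf (s+1) _ _ _ _ _ _ (Ioc_sub_range _ _ _ (Kk_le_s hc i hi))
      (by have := kk_lt_s hc i hi1 hi; omega) (by have := kk_lt_s hc i hi1 hi; omega)]
    rw [Finset.inter_self, Nat.card_Ioc]
    simp only [Finset.mem_Ioc, lt_self_iff_false, false_and, if_false, if_pos rfl]
    have := kk_lt_Kk hc i hi1 hi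
    push_cast
    omega

lemma gram_adj (hc : Ctx s l m) (t i : ℕ) (hi : i + 1 ≤ (Mset s l m).card) :
    dot (vSeq t s l m i) (vSeq t s l m (i+1)) = -1 := by
  rw [vSeq_elim, vSeq_elim, dot_elim]
  unfold VF
  have hN1 : 0 < (Mset s l m).card := by omega
  rcases Nat.eq_zero_or_pos i with rfl | hi1
  · simp only [Nat.zero_add, if_true, eq_self_iff_true]
    rw [if_neg (by omega : ¬ (1:ℕ) = 0)]
    rw [sum_chf (s+1) _ _ _ _ _ _ (Icc_sub_range _ _ (minM_le_s hc)) (by omega)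
      (by have := kk_lt_s hc 1 (le_refl _) hi; omega)]
    rw [IccIoc_card]
    have hmin : minM s l m = kk s l m 1 := minM_eq_kk1 hN1
    simp only [Finset.mem_Ioc, Finset.mem_Icc]
    have hk1 := kk_lt_Kk hc 1 (le_refl _) hi
    split_ifs <;> push_cast <;> omega
  · rw [if_neg (by omega : ¬ i = 0), if_neg (by omega : ¬ i+1 = 0)]
    rw [sum_chf (s+1) _ _ _ _ _ _ (Ioc_sub_range _ _ _ (Kk_le_s hc i (by omega)))
      (by have := kk_lt_s hc i hi1 (by omega); omega)
      (by have := kk_lt_s hc (i+1) (by omega) hi; omega)]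
    rw [IocIoc_card]
    have hKk : Kk s l m i = kk s l m (i+1) := Kk_eq i hi1 (by omega)
    have h1 : kk s l m i < kk s l m (i+1) := kk_strict i (i+1) hi1 (by omega) hi
    have h2 : kk s l m (i+1) < Kk s l m (i+1) := kk_lt_Kk hc (i+1) (by omega) hi
    simp only [Finset.mem_Ioc]
    split_ifs <;> push_cast <;> omega

lemma gram_far (hc : Ctx s l m) (t i j : ℕ) (hij : i + 2 ≤ j) (hj : j ≤ (Mset s l m).card) :
    dot (vSeq t s l m i) (vSeq t s l m j) = 0 := by
  rw [vSeq_elim, vSeq_elim, dot_elim]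
  unfold VF
  have hj1 : 1 ≤ j := by omega
  have hkj := kk_lt_s hc j hj1 hj
  rcases Nat.eq_zero_or_pos i with rfl | hi1
  · rw [if_pos rfl, if_neg (by omega : ¬ j = 0)]
    rw [sum_chf (s+1) _ _ _ _ _ _ (Icc_sub_range _ _ (minM_le_s hc)) (by omega) (by omega)]
    rw [IccIoc_card]
    have hmin : minM s l m = kk s l m 1 := minM_eq_kk1 (by omega)
    have h1 : kk s l m 1 < kk s l m j := kk_strict 1 j (le_refl _) (by omega) hj
    simp only [Finset.mem_Ioc, Finset.mem_Icc]
    split_ifs <;> push_cast <;> omega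
  · rw [if_neg (by omega : ¬ i = 0), if_neg (by omega : ¬ j = 0)]
    have hii : i < (Mset s l m).card := by omega
    rw [sum_chf (s+1) _ _ _ _ _ _ (Ioc_sub_range _ _ _ (Kk_le_s hc i (by omega)))
      (by have := kk_lt_s hc i hi1 (by omega); omega) (by omega)]
    rw [IocIoc_card]
    have hKk : Kk s l m i = kk s l m (i+1) := Kk_eq i hi1 hii
    have h1 : kk s l m (i+1) ≤ kk s l m j := kk_mono (i+1) j (by omega) (by omega) hj
    have h2 : kk s l m i < kk s l m (i+1) := kk_strict i (i+1) hi1 (by omega) (by omega)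
    have h3 : kk s l m (i+1) < kk s l m j ∨ i + 1 = j := by
      rcases lt_or_eq_of_le (show i+1 ≤ j by omega) with hlt | heq
      · left; exact kk_strict (i+1) j (by omega) hlt hj
      · right; exact heq
    have h4 : kk s l m j < Kk s l m j := kk_lt_Kk hc j hj1 hj
    have h5 : kk s l m i < kk s l m j := kk_strict i j hi1 (by omega) hj
    simp only [Finset.mem_Ioc]
    split_ifs <;> push_cast <;> omega

end Gram

section PhiForm

variable {s l : ℕ} {m : ℕ → ℕ}

/-- the linear combination map from coefficients to vectors -/
def Phi (t s l : ℕ) (m : ℕ → ℕ) (u : ℕ → ℤ) : Fin t ⊕ Fin (s + 1) → ℤ :=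
  ∑ i ∈ range ((Mset s l m).card + 1), u i • vSeq t s l m i

lemma dot_sum_smul {ι : Type*} [Fintype ι] (F : Finset ℕ) (c : ℕ → ℤ)
    (f : ℕ → (ι → ℤ)) (y : ι → ℤ) :
    dot (∑ i ∈ F, c i • f i) y = ∑ i ∈ F, c i * dot (f i) y := by
  unfold dot
  simp only [Finset.sum_apply, Pi.smul_apply, smul_eq_mul, Finset.sum_mul, Finset.mul_sum]
  rw [Finset.sum_comm]
  exact Finset.sum_congr rfl fun i _ => Finset.sum_congr rfl fun x _ => by ring


lemma dot_Phi (hc : Ctx s l m) (t : ℕ) (u w : ℕ → ℤ) :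
    dot (Phi t s l m u) (Phi t s l m w) = Bg (gg s l m) (Mset s l m).card u w := by
  set N := (Mset s l m).card with hN
  set v := vSeq t s l m with hv
  have key : ∀ K, K ≤ N + 1 →
      ∑ i ∈ range K, ∑ j ∈ range K, u i * w j * dot (v i) (v j)
        = (∑ i ∈ range K, gg s l m i * u i * w i)
          - ∑ i ∈ range (K-1), (u i * w (i+1) + u (i+1) * w i) := by
    intro K
    induction K with
    | zero => intro _; simp
    | succ K ih =>
        intro hK
        have hKN : K ≤ N := by omega
        have ihK := ih (by omega)
        -- expand the outer sum
        rw [Finset.sum_range_succ]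
        have inner : ∀ i ∈ range K,
            ∑ j ∈ range (K+1), u i * w j * dot (v i) (v j)
              = (∑ j ∈ range K, u i * w j * dot (v i) (v j)) + u i * w K * dot (v i) (v K) :=
          fun i _ => Finset.sum_range_succ _ _
        rw [Finset.sum_congr rfl inner, Finset.sum_add_distrib, ihK]
        rw [Finset.sum_range_succ (fun j => u K * w j * dot (v K) (v j)) K]
        have corner : dot (v K) (v K) = gg s l m K := gram_diag hc t K hKN
        rcases Nat.eq_zero_or_pos K with rfl | hK1
        · simp [corner]; ring
        · have column : ∑ i ∈ range K, u i * w K * dot (v i) (v K)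
              = u (K-1) * w K * (-1) := by
            rw [Finset.sum_eq_single_of_mem (K-1) (mem_range.mpr (by omega))]
            · have hadj : dot (v (K-1)) (v ((K-1)+1)) = -1 := gram_adj hc t (K-1) (by omega)
              rw [show (K-1)+1 = K by omega] at hadj
              rw [hadj]
            · intro b hb hbne
              have hfar : dot (v b) (v K) = 0 := gram_far hc t b K (by
                  have := mem_range.mp hb; omega) hKN
              rw [hfar]; ring
          have row : ∑ j ∈ range K, u K * w j * dot (v K) (v j)
              = u K * w (K-1) * (-1) := by
            rw [Finset.sum_eq_single_of_mem (K-1) (mem_range.mpr (by omega))]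
            · have hadj : dot (v (K-1)) (v ((K-1)+1)) = -1 := gram_adj hc t (K-1) (by omega)
              rw [show (K-1)+1 = K by omega] at hadj
              rw [dot_comm, hadj]
            · intro b hb hbne
              have hfar : dot (v b) (v K) = 0 := gram_far hc t b K (by
                  have := mem_range.mp hb; omega) hKN
              rw [dot_comm, hfar]; ring
          rw [column, row, corner]
          obtain ⟨K', rfl⟩ : ∃ K', K = K' + 1 := ⟨K-1, by omega⟩
          simp only [Nat.add_sub_cancel]
          rw [Finset.sum_range_succ (fun i => (u i * w (i+1) + u (i+1) * w i)) K',
            Finset.sum_range_succ (fun i => gg s l m i * u i * w i) (K'+1)]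
          ring
  have expand : dot (Phi t s l m u) (Phi t s l m w)
      = ∑ i ∈ range (N+1), ∑ j ∈ range (N+1), u i * w j * dot (v i) (v j) := by
    rw [Phi, dot_sum_smul]
    refine Finset.sum_congr rfl fun i _ => ?_
    have h1 : dot (v i) (Phi t s l m w) = ∑ j ∈ range (N+1), w j * dot (v j) (v i) := by
      rw [dot_comm, Phi, dot_sum_smul]
    rw [h1, Finset.mul_sum]
    refine Finset.sum_congr rfl fun j _ => ?_
    rw [dot_comm (v j) (v i)]
    ring
  rw [expand, key (N+1) (le_refl _)]
  simp only [Nat.add_sub_cancel]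
  rfl

end PhiForm


section Coords

variable {s l : ℕ} {m : ℕ → ℕ}

/-- the `j`-th e-coordinate, as a function on ℕ -/
def Xf (t s : ℕ) (x : Fin t ⊕ Fin (s+1) → ℤ) (j : ℕ) : ℤ :=
  if hj : j < s + 1 then x (Sum.inr ⟨j, hj⟩) else 0

lemma Xf_inr (t : ℕ) (x : Fin t ⊕ Fin (s+1) → ℤ) (j : Fin (s+1)) :
    Xf t s x (j : ℕ) = x (Sum.inr j) := by
  unfold Xf
  rw [dif_pos j.isLt]

lemma Xf_elim (t : ℕ) (X : ℕ → ℤ) (j : ℕ) (hj : j ≤ s) :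
    Xf t s (Sum.elim (0 : Fin t → ℤ) (fun j' : Fin (s+1) => X (j' : ℕ))) j = X j := by
  unfold Xf
  rw [dif_pos (by omega : j < s + 1)]
  rfl

lemma Xf_sum (t : ℕ) (F : Finset ℕ) (g : ℕ → (Fin t ⊕ Fin (s+1) → ℤ)) (j : ℕ) :
    Xf t s (∑ i ∈ F, g i) j = ∑ i ∈ F, Xf t s (g i) j := by
  unfold Xf
  split_ifs with h
  · exact Finset.sum_apply _ _ _
  · simp

lemma Xf_smul (t : ℕ) (c : ℤ) (g : Fin t ⊕ Fin (s+1) → ℤ) (j : ℕ) :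
    Xf t s (c • g) j = c * Xf t s g j := by
  unfold Xf; split_ifs with h
  · rfl
  · ring

lemma Xf_sub (t : ℕ) (x y : Fin t ⊕ Fin (s+1) → ℤ) (j : ℕ) :
    Xf t s (x - y) j = Xf t s x j - Xf t s y j := by
  unfold Xf; split_ifs with h
  · rfl
  · ring

lemma Xf_add (t : ℕ) (x y : Fin t ⊕ Fin (s+1) → ℤ) (j : ℕ) :
    Xf t s (x + y) j = Xf t s x j + Xf t s y j := by
  unfold Xf; split_ifs with h
  · rfl
  · ring

lemma Xf_zero (t : ℕ) (j : ℕ) : Xf t s (0 : Fin t ⊕ Fin (s+1) → ℤ) j = 0 := by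
  unfold Xf; split_ifs <;> rfl

/-- the coordinates of `x ∈ L_F` with respect to the basis `v_0, …, v_N` -/
def cc (t s l : ℕ) (m : ℕ → ℕ) (x : Fin t ⊕ Fin (s+1) → ℤ) (i : ℕ) : ℤ :=
  if i = 0 then Xf t s x 0
  else if i ≤ (Mset s l m).card then
    Xf t s x 0 - ∑ j ∈ (Mset s l m).filter (· ≤ kk s l m i), Xf t s x j
  else 0

lemma cc_zero (t i : ℕ) : cc t s l m (0 : Fin t ⊕ Fin (s+1) → ℤ) i = 0 := by
  unfold cc
  split_ifs <;> simp [Xf_zero]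

lemma cc_add (t : ℕ) (x y : Fin t ⊕ Fin (s+1) → ℤ) (i : ℕ) :
    cc t s l m (x + y) i = cc t s l m x i + cc t s l m y i := by
  unfold cc
  split_ifs with h1 h2
  · exact Xf_add t x y 0
  · rw [Xf_add]
    rw [Finset.sum_congr rfl (fun j _ => Xf_add t x y j), Finset.sum_add_distrib]
    ring
  · ring

lemma cc_sub (t : ℕ) (x y : Fin t ⊕ Fin (s+1) → ℤ) (i : ℕ) :
    cc t s l m (x - y) i = cc t s l m x i - cc t s l m y i := by
  unfold cc
  split_ifs with h1 h2
  · exact Xf_sub t x y 0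
  · rw [Xf_sub]
    rw [Finset.sum_congr rfl (fun j _ => Xf_sub t x y j), Finset.sum_sub_distrib]
    ring
  · ring

lemma cc_sum (t : ℕ) (F : Finset ℕ) (c : ℕ → ℤ) (f : ℕ → (Fin t ⊕ Fin (s+1) → ℤ)) (i : ℕ) :
    cc t s l m (∑ j ∈ F, c j • f j) i = ∑ j ∈ F, c j * cc t s l m (f j) i := by
  unfold cc
  split_ifs with h1 h2
  · rw [Xf_sum]
    exact Finset.sum_congr rfl (fun j _ => Xf_smul t (c j) (f j) 0)
  · rw [Xf_sum]
    have h3 : ∀ jM ∈ (Mset s l m).filter (· ≤ kk s l m i),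
        Xf t s (∑ j ∈ F, c j • f j) jM = ∑ j ∈ F, c j * Xf t s (f j) jM := by
      intro jM _
      rw [Xf_sum]
      exact Finset.sum_congr rfl (fun j _ => Xf_smul t (c j) (f j) jM)
    rw [Finset.sum_congr rfl h3, Finset.sum_comm, ← Finset.sum_sub_distrib]
    refine Finset.sum_congr rfl fun j _ => ?_
    rw [mul_sub, Finset.mul_sum]
    congr 1
  · simp

lemma sum_X_ind (M : ℕ) (X : ℕ → ℤ) (A : Finset ℕ) (hA : A ⊆ range M) :
    ∑ j ∈ range M, X j * (if j ∈ A then (1:ℤ) else 0) = ∑ j ∈ A, X j := by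
  have h1 : ∀ j ∈ range M, X j * (if j ∈ A then (1:ℤ) else 0)
      = (if j ∈ A then X j else 0) := by
    intro j _; by_cases h : j ∈ A <;> simp [h]
  rw [Finset.sum_congr rfl h1, Finset.sum_ite_mem, Finset.inter_eq_right.mpr hA]

lemma sum_X_delta (M c : ℕ) (X : ℕ → ℤ) (hc : c < M) :
    ∑ j ∈ range M, X j * (if j = c then (1:ℤ) else 0) = X c := by
  have h1 : ∀ j ∈ range M, X j * (if j = c then (1:ℤ) else 0)
      = (if j = c then X j else 0) := by
    intro j _; by_cases h : j = c <;> simp [h]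
  rw [Finset.sum_congr rfl h1, Finset.sum_ite_eq' (range M) c]
  simp [mem_range.mpr hc]

lemma constraint_eq (hc : Ctx s l m) (t : ℕ) (x : Fin t ⊕ Fin (s+1) → ℤ)
    (hx : x ∈ LFset t s l m) (k : ℕ) (hk1 : 1 ≤ k) (hkl : k ≤ l) :
    Xf t s x (m (k-1)) = ∑ j ∈ Finset.Ioc (m (k-1)) (m k), Xf t s x j := by
  have hdot := hx.2 k hk1 hkl
  have hrw : dot x (wk t s m k) = ∑ j ∈ range (s+1), Xf t s x j * WF m k j := by
    rw [wk_elim, dot, Fintype.sum_sum_type]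
    have h0 : ∀ j : Fin t, x (Sum.inl j) *
        (Sum.elim (0 : Fin t → ℤ) (fun j : Fin (s+1) => WF m k (j:ℕ))) (Sum.inl j) = 0 := by
      intro j; simp
    rw [Finset.sum_congr rfl (fun j _ => h0 j)]
    simp only [Finset.sum_const_zero, zero_add, Sum.elim_inr]
    rw [← Fin.sum_univ_eq_sum_range (fun j => Xf t s x j * WF m k j) (s+1)]
    exact Finset.sum_congr rfl (fun j _ => by rw [Xf_inr])
  rw [hrw] at hdot
  have hexp : ∀ j ∈ range (s+1), Xf t s x j * WF m k j
      = Xf t s x j * (if j ∈ Finset.Ioc (m (k-1)) (m k) then (1:ℤ) else 0)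
        + (-1) * (Xf t s x j * (if j = m (k-1) then (1:ℤ) else 0)) := by
    intro j _; unfold WF chf; ring
  rw [Finset.sum_congr rfl hexp, Finset.sum_add_distrib, ← Finset.mul_sum] at hdot
  rw [sum_X_ind _ _ _ (Ioc_sub_range _ _ _ (hc.m_le_s k hkl))] at hdot
  rw [sum_X_delta _ _ _ (by have := hc.m_le_s k hkl; have := hc.hstep k hk1 hkl; omega)] at hdot
  linarith

/-- the value of `x ∈ L_F` at a node -/
lemma node_val (hc : Ctx s l m) (t : ℕ) (x : Fin t ⊕ Fin (s+1) → ℤ)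
    (hx : x ∈ LFset t s l m) :
    ∀ k, k ≤ l → Xf t s x (m k) = Xf t s x 0
      - ∑ j ∈ (Mset s l m).filter (· < m k), Xf t s x j := by
  intro k
  induction k with
  | zero =>
      intro _
      have h1 : (Mset s l m).filter (· < m 0) = ∅ := by
        apply Finset.filter_false_of_mem
        intro j _
        rw [hc.hm0]
        omega
      rw [h1, hc.hm0]
      simp
  | succ k ih =>
      intro hkl
      have hstep : m k < m (k+1) := by
        have := hc.hstep (k+1) (by omega) hkl
        simpa using this
      have hcon := constraint_eq hc t x hx (k+1) (by omega) hkl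
      simp only [Nat.add_sub_cancel] at hcon
      have hioc : Finset.Ioc (m k) (m (k+1)) = insert (m (k+1)) (Finset.Ioo (m k) (m (k+1))) := by
        rw [Finset.Ioo_insert_right hstep]
      have hnotmem : m (k+1) ∉ Finset.Ioo (m k) (m (k+1)) := by
        simp [Finset.mem_Ioo]
      rw [hioc, Finset.sum_insert hnotmem] at hcon
      have hMsplit : (Mset s l m).filter (· < m (k+1))
          = (Mset s l m).filter (· < m k) ∪ Finset.Ioo (m k) (m (k+1)) := by
        ext j
        simp only [mem_filter, Finset.mem_union, Finset.mem_Ioo]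
        constructor
        · rintro ⟨hjM, hjlt⟩
          rcases lt_trichotomy j (m k) with hlt | heq | hgt
          · left; exact ⟨hjM, hlt⟩
          · exfalso
            have := hc.node_not_Mset (k := k) (by omega)
            rw [heq] at hjM
            exact this hjM
          · right; exact ⟨hgt, hjlt⟩
        · rintro (⟨hjM, hjlt⟩ | ⟨h1, h2⟩)
          · exact ⟨hjM, by omega⟩
          · refine ⟨?_, h2⟩
            have := hc.interior_M (k := k+1) (j := j) (by omega) hkl (by simpa using h1) h2
            exact this
      have hdisj : Disjoint ((Mset s l m).filter (· < m k)) (Finset.Ioo (m k) (m (k+1))) := by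
        rw [Finset.disjoint_left]
        intro j hj1 hj2
        have h1 := (mem_filter.mp hj1).2
        have h2 := (Finset.mem_Ioo.mp hj2).1
        omega
      rw [hMsplit, Finset.sum_union hdisj]
      have hih := ih (by omega)
      linarith

lemma S1_eq (hc : Ctx s l m) (hN : 0 < (Mset s l m).card) :
    (Mset s l m).filter (· ≤ kk s l m 1) = {kk s l m 1} := by
  ext j
  simp only [mem_filter, Finset.mem_singleton]
  constructor
  · rintro ⟨hjM, hjle⟩
    obtain ⟨i', h1, h2, rfl⟩ := kk_surj j hjM
    have := kk_mono 1 i' (le_refl _) h1 h2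
    omega
  · rintro rfl
    exact ⟨kk_mem 1 (le_refl _) hN, le_refl _⟩

lemma S_succ (hc : Ctx s l m) (i : ℕ) (h2 : 2 ≤ i) (hN : i ≤ (Mset s l m).card) :
    (Mset s l m).filter (· ≤ kk s l m i)
      = insert (kk s l m i) ((Mset s l m).filter (· ≤ kk s l m (i-1))) := by
  ext j
  simp only [mem_filter, Finset.mem_insert]
  constructor
  · rintro ⟨hjM, hjle⟩
    obtain ⟨i', h1', h2', rfl⟩ := kk_surj j hjM
    rcases eq_or_lt_of_le hjle with heq | hlt
    · left; omega
    · right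
      have hii : i' < i := kk_reflect i' i h1' (by omega) h2' hN hlt
      exact ⟨kk_mem i' h1' h2', kk_mono i' (i-1) h1' (by omega) (by omega)⟩
  · rintro (rfl | ⟨hjM, hjle⟩)
    · exact ⟨kk_mem i (by omega) hN, le_refl _⟩
    · refine ⟨hjM, ?_⟩
      have := kk_mono (i-1) i (by omega) (by omega) hN
      omega

lemma kk_notin_S (hc : Ctx s l m) (i : ℕ) (h2 : 2 ≤ i) (hN : i ≤ (Mset s l m).card) :
    kk s l m i ∉ (Mset s l m).filter (· ≤ kk s l m (i-1)) := by
  intro hmem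
  have h1 := (mem_filter.mp hmem).2
  have := kk_strict (i-1) i (by omega) (by omega) hN
  omega

/-- injectivity of the coordinates on `L_F` -/
lemma cc_inj (hc : Ctx s l m) (t : ℕ) (x : Fin t ⊕ Fin (s+1) → ℤ)
    (hx : x ∈ LFset t s l m)
    (h0 : ∀ i, i ≤ (Mset s l m).card → cc t s l m x i = 0) : x = 0 := by
  have hXf0 : Xf t s x 0 = 0 := by
    have := h0 0 (by omega)
    unfold cc at this
    rwa [if_pos rfl] at this
  -- values at points of M vanish
  have hM : ∀ i, 1 ≤ i → i ≤ (Mset s l m).card → Xf t s x (kk s l m i) = 0 := by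
    intro i hi1 hi2
    induction i with
    | zero => omega
    | succ i ih =>
        rcases Nat.eq_zero_or_pos i with rfl | hipos
        · -- i = 1
          show Xf t s x (kk s l m 1) = 0
          simp only [Nat.zero_add] at hi2
          have := h0 1 hi2
          unfold cc at this
          rw [if_neg (by omega), if_pos hi2, S1_eq hc (by omega)] at this
          rw [Finset.sum_singleton] at this
          omega
        · have hcci := h0 (i+1) hi2
          have hcci' := h0 i (by omega)
          unfold cc at hcci hcci'
          rw [if_neg (by omega), if_pos hi2] at hcci
          rw [if_neg (by omega), if_pos (by omega)] at hcci'
          rw [S_succ hc (i+1) (by omega) hi2] at hcci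
          rw [Finset.sum_insert (kk_notin_S hc (i+1) (by omega) hi2)] at hcci
          simp only [Nat.add_sub_cancel] at hcci
          omega
  -- values at nodes vanish
  have hnode : ∀ k, k ≤ l → Xf t s x (m k) = 0 := by
    intro k hkl
    rw [node_val hc t x hx k hkl, hXf0]
    have hzero : ∀ j ∈ (Mset s l m).filter (· < m k), Xf t s x j = 0 := by
      intro j hj
      obtain ⟨i', h1, h2, rfl⟩ := kk_surj j (mem_filter.mp hj).1
      exact hM i' h1 h2
    rw [Finset.sum_eq_zero hzero]
    ring
  funext z
  cases z with
  | inl j => exact hx.1 j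
  | inr j =>
      have hval : x (Sum.inr j) = Xf t s x (j : ℕ) := (Xf_inr t x j).symm
      rw [hval]
      show Xf t s x (j:ℕ) = 0
      by_cases hjM : (j:ℕ) ∈ Mset s l m
      · obtain ⟨i', h1, h2, heq⟩ := kk_surj _ hjM
        rw [← heq]
        exact hM i' h1 h2
      · have hjs : (j:ℕ) ≤ s := by omega
        rw [mem_Mset'] at hjM
        push_neg at hjM
        obtain ⟨k, hkl, hkeq⟩ := hjM hjs
        rw [hkeq]
        exact hnode k hkl

end Coords


section Duality

variable {s l : ℕ} {m : ℕ → ℕ}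

lemma VF_at_zero (hc : Ctx s l m) (j : ℕ) (hj : j ≤ (Mset s l m).card) :
    VF s l m j 0 = if j = 0 then 1 else 0 := by
  by_cases h : j = 0
  · unfold VF chf
    rw [if_pos h, if_pos h, if_pos (by simp [Finset.mem_Icc] : (0:ℕ) ∈ Finset.Icc 0 (minM s l m))]
    ring
  · have hk1 := kk_pos hc j (by omega) hj
    unfold VF chf
    rw [if_neg h, if_neg h]
    rw [if_neg (by simp [Finset.mem_Ioc] : (0:ℕ) ∉ Finset.Ioc (kk s l m j) (Kk s l m j))]
    rw [if_neg (by omega : ¬ (0:ℕ) = kk s l m j)]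
    ring

lemma kk_inj_iff (i' j : ℕ) (hi'1 : 1 ≤ i') (hi'2 : i' ≤ (Mset s l m).card)
    (hj1 : 1 ≤ j) (hj2 : j ≤ (Mset s l m).card) :
    kk s l m i' = kk s l m j ↔ i' = j := by
  constructor
  · intro he
    rcases lt_trichotomy i' j with h | h | h
    · have := kk_strict i' j hi'1 h hj2; omega
    · exact h
    · have := kk_strict j i' hj1 h hi'2; omega
  · intro he; rw [he]

lemma VF_at_kk (hc : Ctx s l m) (i' j : ℕ) (hi'1 : 1 ≤ i') (hi'2 : i' ≤ (Mset s l m).card)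
    (hj : j ≤ (Mset s l m).card) :
    VF s l m j (kk s l m i')
      = if j = 0 then (if i' = 1 then 1 else 0)
        else ((if i' = j+1 then (1:ℤ) else 0) - (if i' = j then 1 else 0)) := by
  by_cases hj0 : j = 0
  · unfold VF chf
    rw [if_pos hj0, if_pos hj0]
    have hminM : minM s l m = kk s l m 1 := minM_eq_kk1 (by omega)
    have hmem : (kk s l m i' ∈ Finset.Icc 0 (minM s l m)) ↔ i' = 1 := by
      rw [Finset.mem_Icc, hminM]
      constructor
      · rintro ⟨_, h2⟩
        rcases eq_or_lt_of_le hi'1 with heq | hlt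
        · omega
        · have := kk_strict 1 i' (le_refl _) hlt hi'2; omega
      · rintro rfl; exact ⟨Nat.zero_le _, le_refl _⟩
    rw [if_congr hmem rfl rfl]
    ring
  · unfold VF chf
    rw [if_neg hj0, if_neg hj0]
    have hj1 : 1 ≤ j := by omega
    have hmem : (kk s l m i' ∈ Finset.Ioc (kk s l m j) (Kk s l m j)) ↔ i' = j + 1 := by
      rcases lt_or_eq_of_le hj with hlt | heq
      · rw [Kk_eq j hj1 hlt, Finset.mem_Ioc]
        constructor
        · rintro ⟨h1, h2⟩
          have ha := kk_reflect j i' hj1 hi'1 hj hi'2 h1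
          have hb : i' ≤ j + 1 := by
            by_contra hcon
            have := kk_strict (j+1) i' (by omega) (by omega) hi'2
            omega
          omega
        · rintro rfl
          exact ⟨kk_strict j (j+1) hj1 (by omega) (by omega), le_refl _⟩
      · constructor
        · intro hmem
          exfalso
          have h1 := (Finset.mem_Ioc.mp hmem).1
          have := kk_mono i' j hi'1 (by omega) hj
          omega
        · intro hcon; omega
    have hdelta : (kk s l m i' = kk s l m j) ↔ i' = j := kk_inj_iff i' j hi'1 hi'2 hj1 hj
    rw [if_congr hmem rfl rfl, if_congr hdelta rfl rfl]
    ring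

lemma filter_le_kk_eq_image (i : ℕ) (hi1 : 1 ≤ i) (hi2 : i ≤ (Mset s l m).card) :
    (Mset s l m).filter (· ≤ kk s l m i) = (Finset.Icc 1 i).image (kk s l m) := by
  ext j
  simp only [mem_filter, Finset.mem_image, Finset.mem_Icc]
  constructor
  · rintro ⟨hjM, hjle⟩
    obtain ⟨i', h1, h2, rfl⟩ := kk_surj j hjM
    have hle : i' ≤ i := by
      by_contra hcon
      have := kk_strict i i' hi1 (by omega) h2
      omega
    exact ⟨i', ⟨h1, hle⟩, rfl⟩
  · rintro ⟨i', ⟨h1, h2⟩, rfl⟩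
    exact ⟨kk_mem i' h1 (by omega), kk_mono i' i h1 h2 hi2⟩

lemma sum_filter_kk (i : ℕ) (hi1 : 1 ≤ i) (hi2 : i ≤ (Mset s l m).card) (f : ℕ → ℤ) :
    ∑ j ∈ (Mset s l m).filter (· ≤ kk s l m i), f j
      = ∑ i' ∈ Finset.Icc 1 i, f (kk s l m i') := by
  rw [filter_le_kk_eq_image i hi1 hi2]
  rw [Finset.sum_image]
  intro c hc' d hd' hcd
  simp only [Finset.coe_Icc, Set.mem_Icc, Finset.mem_coe, Finset.mem_Icc] at hc' hd'
  exact (kk_inj_iff c d (by omega) (by omega) (by omega) (by omega)).mp hcd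

lemma cc_vseq (hc : Ctx s l m) (t i j : ℕ) (hi : i ≤ (Mset s l m).card)
    (hj : j ≤ (Mset s l m).card) :
    cc t s l m (vSeq t s l m j) i = if i = j then 1 else 0 := by
  have hXf : ∀ j', j' ≤ s → Xf t s (vSeq t s l m j) j' = VF s l m j j' := by
    intro j' hj'
    rw [vSeq_elim]
    exact Xf_elim t _ j' hj'
  unfold cc
  by_cases hi0 : i = 0
  · rw [if_pos hi0, hXf 0 (Nat.zero_le s), VF_at_zero hc j hj]
    subst hi0
    split_ifs <;> omega
  · rw [if_neg hi0, if_pos hi]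
    have hi1 : 1 ≤ i := by omega
    rw [hXf 0 (Nat.zero_le s), VF_at_zero hc j hj]
    have hsum1 : ∀ j' ∈ (Mset s l m).filter (· ≤ kk s l m i),
        Xf t s (vSeq t s l m j) j' = VF s l m j j' := by
      intro j' hj'
      exact hXf j' (mem_Mset'.mp (mem_filter.mp hj').1).1
    rw [Finset.sum_congr rfl hsum1, sum_filter_kk i hi1 hi]
    by_cases hj0 : j = 0
    · have hsum2 : ∀ i' ∈ Finset.Icc 1 i, VF s l m j (kk s l m i')
          = (if i' = 1 then (1:ℤ) else 0) := by
        intro i' hi'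
        simp only [Finset.mem_Icc] at hi'
        rw [VF_at_kk hc i' j hi'.1 (by omega) hj, if_pos hj0]
      rw [Finset.sum_congr rfl hsum2, if_pos hj0]
      rw [Finset.sum_ite_eq' (Finset.Icc 1 i) 1 (fun _ => (1:ℤ))]
      rw [if_pos (by simp [Finset.mem_Icc]; omega : 1 ∈ Finset.Icc 1 i)]
      rw [if_neg (by omega : ¬ i = j)]
      ring
    · have hsum2 : ∀ i' ∈ Finset.Icc 1 i, VF s l m j (kk s l m i')
          = ((if i' = j+1 then (1:ℤ) else 0) - (if i' = j then 1 else 0)) := by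
        intro i' hi'
        simp only [Finset.mem_Icc] at hi'
        rw [VF_at_kk hc i' j hi'.1 (by omega) hj, if_neg hj0]
      rw [Finset.sum_congr rfl hsum2, if_neg hj0]
      rw [Finset.sum_sub_distrib]
      rw [Finset.sum_ite_eq' (Finset.Icc 1 i) (j+1) (fun _ => (1:ℤ))]
      rw [Finset.sum_ite_eq' (Finset.Icc 1 i) j (fun _ => (1:ℤ))]
      simp only [Finset.mem_Icc]
      split_ifs <;> omega

lemma cc_Phi (hc : Ctx s l m) (t : ℕ) (u : ℕ → ℤ) (i : ℕ) (hi : i ≤ (Mset s l m).card) :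
    cc t s l m (Phi t s l m u) i = u i := by
  rw [Phi, cc_sum]
  rw [Finset.sum_eq_single_of_mem i (mem_range.mpr (by omega))]
  · rw [cc_vseq hc t i i hi hi, if_pos rfl]; ring
  · intro b hb hbne
    rw [cc_vseq hc t i b hi (by have := mem_range.mp hb; omega)]
    rw [if_neg (fun hcon => hbne hcon.symm)]
    ring

lemma Phi_mem_LF (hc : Ctx s l m) (t : ℕ) (u : ℕ → ℤ) :
    Phi t s l m u ∈ LFset t s l m := by
  constructor
  · intro j
    rw [Phi]
    rw [Finset.sum_apply]
    apply Finset.sum_eq_zero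
    intro i _
    rw [Pi.smul_apply, vSeq_elim]
    simp
  · intro k hk1 hkl
    rw [Phi, dot_sum_smul]
    apply Finset.sum_eq_zero
    intro i hi
    rw [vseq_wk_dot hc t i k (by have := mem_range.mp hi; omega) hk1 hkl]
    ring

lemma dot_sub_left {ι : Type*} [Fintype ι] (x y z : ι → ℤ) :
    dot (x - y) z = dot x z - dot y z := by
  unfold dot
  rw [← Finset.sum_sub_distrib]
  exact Finset.sum_congr rfl fun i _ => by simp [Pi.sub_apply]; ring

lemma LF_sub (t : ℕ) (x y : Fin t ⊕ Fin (s+1) → ℤ)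
    (hx : x ∈ LFset t s l m) (hy : y ∈ LFset t s l m) : x - y ∈ LFset t s l m := by
  constructor
  · intro j
    simp [Pi.sub_apply, hx.1 j, hy.1 j]
  · intro k hk1 hkl
    rw [dot_sub_left, hx.2 k hk1 hkl, hy.2 k hk1 hkl]
    ring

/-- expansion of an element of `L_F` in the basis -/
lemma phi_cc (hc : Ctx s l m) (t : ℕ) (x : Fin t ⊕ Fin (s+1) → ℤ)
    (hx : x ∈ LFset t s l m) : Phi t s l m (cc t s l m x) = x := by
  have hy : x - Phi t s l m (cc t s l m x) ∈ LFset t s l m :=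
    LF_sub t _ _ hx (Phi_mem_LF hc t _)
  have hz : ∀ i, i ≤ (Mset s l m).card →
      cc t s l m (x - Phi t s l m (cc t s l m x)) i = 0 := by
    intro i hi
    rw [cc_sub, cc_Phi hc t _ i hi]
    ring
  have h2 : x - Phi t s l m (cc t s l m x) = 0 := cc_inj hc t _ hy hz
  exact (sub_eq_zero.mp h2).symm

end Duality


section Main

variable {s l : ℕ} {m : ℕ → ℕ}

lemma cc_out (t : ℕ) (x : Fin t ⊕ Fin (s+1) → ℤ) (i : ℕ) (hi : (Mset s l m).card < i) :
    cc t s l m x i = 0 := by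
  unfold cc
  rw [if_neg (by omega), if_neg (by omega)]

lemma Phi_congr (t : ℕ) (u u' : ℕ → ℤ)
    (hcong : ∀ i, i ≤ (Mset s l m).card → u i = u' i) :
    Phi t s l m u = Phi t s l m u' := by
  unfold Phi
  exact Finset.sum_congr rfl fun i hi => by
    rw [hcong i (by have := mem_range.mp hi; omega)]

lemma Phi_add (t : ℕ) (u w : ℕ → ℤ) :
    Phi t s l m (fun i => u i + w i) = Phi t s l m u + Phi t s l m w := by
  unfold Phi
  rw [← Finset.sum_add_distrib]
  exact Finset.sum_congr rfl fun i _ => by rw [add_smul]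

lemma Phi_neg (t : ℕ) (u : ℕ → ℤ) :
    Phi t s l m (fun i => -(u i)) = -Phi t s l m u := by
  unfold Phi
  rw [← Finset.sum_neg_distrib]
  exact Finset.sum_congr rfl fun i _ => by rw [neg_smul]

lemma Phi_ind (t a' b' : ℕ) (hbN : b' ≤ (Mset s l m).card) :
    Phi t s l m (ind a' b') = ∑ i ∈ Finset.Icc a' b', vSeq t s l m i := by
  unfold Phi ind
  have h1 : ∀ i ∈ range ((Mset s l m).card + 1),
      (if a' ≤ i ∧ i ≤ b' then (1:ℤ) else 0) • vSeq t s l m i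
        = (if a' ≤ i ∧ i ≤ b' then vSeq t s l m i else 0) := by
    intro i _
    split_ifs <;> simp
  rw [Finset.sum_congr rfl h1, ← Finset.sum_filter]
  congr 1
  ext i
  simp only [mem_filter, mem_range, Finset.mem_Icc]
  omega

lemma Phi_ne_zero (hc : Ctx s l m) (t : ℕ) (u : ℕ → ℤ) (i : ℕ)
    (hi : i ≤ (Mset s l m).card) (hu : u i ≠ 0) : Phi t s l m u ≠ 0 := by
  intro hcon
  apply hu
  rw [← cc_Phi hc t u i hi, hcon, cc_zero]

lemma l_pos {p q n r : ℤ} {t s l : ℕ} {a : ℕ → ℤ} {m : ℕ → ℕ} {σ : Fin t → ℤ}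
    (h : IsCMLattice p q n r t s l a m σ) : 1 ≤ l := by
  by_contra hcon
  have hl0 : l = 0 := by omega
  have hcf := h.hcf
  rw [hl0] at hcf
  have hlist : (List.range (0 + 1)).map (fun i => ((a i : ℚ))) = [(a 0 : ℚ)] := by
    norm_num [List.range_succ]
  rw [hlist] at hcf
  have hcf' : (a 0 : ℚ) = (p : ℚ) / (q : ℚ) := hcf
  have hq : ((q:ℤ) : ℚ) ≠ 0 := by
    have := h.hq2
    exact_mod_cast (by omega : (q:ℤ) ≠ 0)
  rw [eq_div_iff hq] at hcf'
  have hint : (a 0) * q = p := by exact_mod_cast hcf'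
  have hdvd : q ∣ r := ⟨n - a 0, by linear_combination h.hp + hint⟩
  have h1 := Int.le_of_dvd h.hr0 hdvd
  have h2 := h.hrq
  omega

lemma ctx_of {p q n r : ℤ} {t s l : ℕ} {a : ℕ → ℤ} {m : ℕ → ℕ} {σ : Fin t → ℤ}
    (h : IsCMLattice p q n r t s l a m σ) : Ctx s l m := by
  refine ⟨l_pos h, h.hm0, h.hs, ?_⟩
  intro k hk1 hkl
  have h1 := h.hmrec k hk1 hkl
  have h2 := h.hak k hk1 hkl
  omega

end Main

end CM916

/-- Lemma 6.6 of the paper: a nonzero vector `x ∈ L_F` is irreducible in `L_F`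
if and only if `x = ±(v_a + v_{a+1} + ⋯ + v_b)` for some `0 ≤ a ≤ b ≤ m`. -/
theorem stmt_9 (p q n r : ℤ) (t s l : ℕ) (a : ℕ → ℤ) (m : ℕ → ℕ) (σ : Fin t → ℤ)
    (h : IsCMLattice p q n r t s l a m σ)
    (x : Fin t ⊕ Fin (s + 1) → ℤ) (hx : x ∈ LFset t s l m) (hx0 : x ≠ 0) :
    IrredIn (LFset t s l m) x ↔
      ∃ a' b' : ℕ, a' ≤ b' ∧ b' ≤ (Mset s l m).card ∧
        (x = ∑ i ∈ Finset.Icc a' b', vSeq t s l m i ∨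
         x = -∑ i ∈ Finset.Icc a' b', vSeq t s l m i) := by
  classical
  have hctx : CM916.Ctx s l m := CM916.ctx_of h
  set N := (Mset s l m).card with hNdef
  have hx_phi : x = CM916.Phi t s l m (CM916.cc t s l m x) := (CM916.phi_cc hctx t x hx).symm
  constructor
  · intro hirr
    by_contra hno
    apply hirr
    -- the coordinates of x are not an interval indicator
    have hni : ¬ ∃ a' b' : ℕ, a' ≤ b' ∧ b' ≤ N ∧
        ((∀ i, CM916.cc t s l m x i = CM916.ind a' b' i) ∨
         (∀ i, CM916.cc t s l m x i = -CM916.ind a' b' i)) := by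
      rintro ⟨a', b', hab, hbN, hcase⟩
      apply hno
      refine ⟨a', b', hab, hbN, ?_⟩
      rcases hcase with hcase | hcase
      · left
        rw [hx_phi, show CM916.cc t s l m x = CM916.ind a' b' from funext hcase,
          CM916.Phi_ind t a' b' hbN]
      · right
        rw [hx_phi, show CM916.cc t s l m x = fun i => -(CM916.ind a' b' i) from funext hcase,
          CM916.Phi_neg, CM916.Phi_ind t a' b' hbN]
    have hz0 : ∃ i, CM916.cc t s l m x i ≠ 0 := by
      by_contra hcon
      push_neg at hcon
      exact hx0 (CM916.cc_inj hctx t x hx (fun i _ => hcon i))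
    obtain ⟨u, w, hu_out, hw_out, hzuw, hu0, hw0, hB⟩ :=
      CM916.abs_red (CM916.gg s l m) N (fun i hi => CM916.gg2 hctx i hi)
        (CM916.cc t s l m x) (fun i hi => CM916.cc_out t x i hi) hz0 hni
    obtain ⟨i1, hi1⟩ := hu0
    obtain ⟨i2, hi2⟩ := hw0
    have hi1N : i1 ≤ N := by by_contra hcon; exact hi1 (hu_out i1 (by omega))
    have hi2N : i2 ≤ N := by by_contra hcon; exact hi2 (hw_out i2 (by omega))
    refine ⟨CM916.Phi t s l m u, CM916.Phi t s l m w,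
      CM916.Phi_mem_LF hctx t u, CM916.Phi_mem_LF hctx t w,
      CM916.Phi_ne_zero hctx t u i1 hi1N hi1,
      CM916.Phi_ne_zero hctx t w i2 hi2N hi2, ?_, ?_⟩
    · rw [hx_phi, CM916.Phi_congr t _ (fun i => u i + w i) (fun i _ => hzuw i),
        CM916.Phi_add]
    · rw [CM916.dot_Phi hctx t u w]
      exact hB
  · rintro ⟨a', b', hab, hbN, hcase⟩
    rintro ⟨x1, x2, hx1, hx2, hn1, hn2, heq, hdot⟩
    have houts1 : ∀ i, N < i → CM916.cc t s l m x1 i = 0 := fun i hi => CM916.cc_out t x1 i hi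
    have houts2 : ∀ i, N < i → CM916.cc t s l m x2 i = 0 := fun i hi => CM916.cc_out t x2 i hi
    have hnz1 : ∃ i, CM916.cc t s l m x1 i ≠ 0 := by
      by_contra hcon
      push_neg at hcon
      exact hn1 (CM916.cc_inj hctx t x1 hx1 (fun i _ => hcon i))
    have hnz2 : ∃ i, CM916.cc t s l m x2 i ≠ 0 := by
      by_contra hcon
      push_neg at hcon
      exact hn2 (CM916.cc_inj hctx t x2 hx2 (fun i _ => hcon i))
    have hBge : 0 ≤ CM916.Bg (CM916.gg s l m) N (CM916.cc t s l m x1) (CM916.cc t s l m x2) := by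
      rw [← CM916.dot_Phi hctx t, CM916.phi_cc hctx t x1 hx1, CM916.phi_cc hctx t x2 hx2]
      exact hdot
    rcases hcase with hcase | hcase
    · have hccx : ∀ i, CM916.cc t s l m x i = 1 * CM916.ind a' b' i := by
        intro i
        rcases le_or_gt i N with hi | hi
        · rw [hcase, ← CM916.Phi_ind t a' b' hbN, CM916.cc_Phi hctx t _ i hi]
          ring
        · rw [CM916.cc_out t x i hi]
          unfold CM916.ind
          rw [if_neg (by omega)]
          ring
      have hz : ∀ i, CM916.cc t s l m x1 i + CM916.cc t s l m x2 i
          = 1 * CM916.ind a' b' i := by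
        intro i
        rw [← CM916.cc_add, ← heq]
        exact hccx i
      exact CM916.abs_irred (CM916.gg s l m) N a' b' (fun i hi => CM916.gg2 hctx i hi)
        hab hbN 1 (Or.inl rfl) _ _ houts1 houts2 hz hnz1 hnz2 hBge
    · have hccx : ∀ i, CM916.cc t s l m x i = (-1) * CM916.ind a' b' i := by
        intro i
        rcases le_or_gt i N with hi | hi
        · have hxeq : x = CM916.Phi t s l m (fun i => -(CM916.ind a' b' i)) := by
            rw [CM916.Phi_neg, CM916.Phi_ind t a' b' hbN]
            exact hcase
          rw [hxeq, CM916.cc_Phi hctx t _ i hi]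
          ring
        · rw [CM916.cc_out t x i hi]
          unfold CM916.ind
          rw [if_neg (by omega)]
          ring
      have hz : ∀ i, CM916.cc t s l m x1 i + CM916.cc t s l m x2 i
          = (-1) * CM916.ind a' b' i := by
        intro i
        rw [← CM916.cc_add, ← heq]
        exact hccx i
      exact CM916.abs_irred (CM916.gg s l m) N a' b' (fun i hi => CM916.gg2 hctx i hi)
        hab hbN (-1) (Or.inr rfl) _ _ houts1 houts2 hz hnz1 hnz2 hBge
end

section
/- Let L be a p/q-changemaker lattice with p > q ≥ 2, and suppose σ_i ≥ 1 for all 1 ≤ i ≤ t. If x ∈ L is irreducible and x·e_0 ≠ 0, then |x·f_1| ≤ 1. -/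
/-- `j`-th e-coordinate of `x`, as a function of `j : ℕ`. -/
def eN (t s : ℕ) (x : Fin t ⊕ Fin (s + 1) → ℤ) (j : ℕ) : ℤ :=
  if h : j < s + 1 then x (Sum.inr ⟨j, h⟩) else 0

lemma dot_single {ι : Type*} [Fintype ι] [DecidableEq ι] (x : ι → ℤ) (i : ι) :
    dot x (Pi.single i 1) = x i := by
  unfold dot
  rw [Finset.sum_eq_single i]
  · simp
  · intro b _ hb; simp [Pi.single_apply, hb]
  · intro hi; exact absurd (Finset.mem_univ i) hi

lemma dot_fvec (t s : ℕ) (x : Fin t ⊕ Fin (s + 1) → ℤ) (i : Fin t) :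
    dot x (fvec t s i) = x (Sum.inl i) := dot_single x _

lemma dot_evec (t s : ℕ) (x : Fin t ⊕ Fin (s + 1) → ℤ) (j : Fin (s + 1)) :
    dot x (evec t s j) = x (Sum.inr j) := dot_single x _

lemma dot_sub {ι : Type*} [Fintype ι] (x y v : ι → ℤ) :
    dot (x - y) v = dot x v - dot y v := by
  unfold dot; rw [← Finset.sum_sub_distrib]; exact Finset.sum_congr rfl (by intros; simp [sub_mul])

lemma dot_neg {ι : Type*} [Fintype ι] (x v : ι → ℤ) : dot (-x) v = -dot x v := by
  unfold dot; rw [← Finset.sum_neg_distrib]; exact Finset.sum_congr rfl (by intros; simp)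

lemma dot_w0_eq (t s : ℕ) (σ : Fin t → ℤ) (x : Fin t ⊕ Fin (s + 1) → ℤ) :
    dot x (w0 t s σ) = (∑ i, x (Sum.inl i) * σ i) + eN t s x 0 := by
  unfold dot w0
  rw [Fintype.sum_sum_type]
  congr 1
  rw [Finset.sum_eq_single (0 : Fin (s + 1))]
  · simp [eN]
  · intro b _ hb
    have : (b : ℕ) ≠ 0 := by
      intro hb0; exact hb (Fin.ext hb0)
    simp [this, hb]
  · intro hi; exact absurd (Finset.mem_univ _) hi

lemma dot_wk_eq (t s : ℕ) (m : ℕ → ℕ) (k : ℕ) (hlt : m (k - 1) < m k) (hle : m k ≤ s)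
    (x : Fin t ⊕ Fin (s + 1) → ℤ) :
    dot x (wk t s m k) =
      -eN t s x (m (k - 1)) + ∑ j ∈ Finset.Ioc (m (k - 1)) (m k), eN t s x j := by
  unfold dot wk
  rw [Fintype.sum_sum_type]
  have h1 : ∀ i : Fin t, x (Sum.inl i) * (Sum.elim (0 : Fin t → ℤ)
      (fun j : Fin (s+1) => if (j : ℕ) = m (k - 1) then -1
        else if m (k - 1) < (j : ℕ) ∧ (j : ℕ) ≤ m k then 1 else 0) (Sum.inl i)) = 0 := by
    intro i; simp
  rw [Finset.sum_congr rfl (fun i _ => h1 i), Finset.sum_const, smul_zero, zero_add]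
  have h2 : ∀ j : Fin (s + 1), x (Sum.inr j) * (Sum.elim (0 : Fin t → ℤ)
      (fun j : Fin (s+1) => if (j : ℕ) = m (k - 1) then -1
        else if m (k - 1) < (j : ℕ) ∧ (j : ℕ) ≤ m k then 1 else 0) (Sum.inr j)) =
      (fun jn : ℕ => eN t s x jn * (if jn = m (k - 1) then -1
        else if m (k - 1) < jn ∧ jn ≤ m k then 1 else 0)) (j : ℕ) := by
    intro j
    simp only [Sum.elim_inr, eN, j.isLt, dif_pos]
  rw [Finset.sum_congr rfl (fun j _ => h2 j)]
  rw [Fin.sum_univ_eq_sum_range (fun jn : ℕ => eN t s x jn * (if jn = m (k - 1) then -1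
        else if m (k - 1) < jn ∧ jn ≤ m k then 1 else 0)) (s + 1)]
  have hmem : m (k - 1) ∈ Finset.range (s + 1) := by
    simp [Finset.mem_range]; omega
  rw [← Finset.add_sum_erase _ _ hmem]
  congr 1
  · simp
  · have step : ∀ jn ∈ (Finset.range (s + 1)).erase (m (k - 1)),
        eN t s x jn * (if jn = m (k - 1) then -1
          else if m (k - 1) < jn ∧ jn ≤ m k then 1 else 0) =
        (if m (k - 1) < jn ∧ jn ≤ m k then eN t s x jn else 0) := by
      intro jn hjn
      rw [if_neg (Finset.mem_erase.mp hjn).1]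
      by_cases hc : m (k - 1) < jn ∧ jn ≤ m k
      · rw [if_pos hc, if_pos hc, mul_one]
      · rw [if_neg hc, if_neg hc, mul_zero]
    rw [Finset.sum_congr rfl step, ← Finset.sum_filter]
    apply Finset.sum_congr _ (fun _ _ => rfl)
    ext jn
    simp only [Finset.mem_filter, Finset.mem_erase, Finset.mem_range, Finset.mem_Ioc]
    constructor
    · rintro ⟨⟨hne, hr⟩, hlo, hhi⟩; exact ⟨hlo, hhi⟩
    · rintro ⟨hlo, hhi⟩; exact ⟨⟨by omega, by omega⟩, ⟨hlo, hhi⟩⟩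



lemma mem_L_iff (t s l : ℕ) (σ : Fin t → ℤ) (m : ℕ → ℕ)
    (hml : ∀ k, 1 ≤ k → k ≤ l → m (k - 1) < m k ∧ m k ≤ s)
    (x : Fin t ⊕ Fin (s + 1) → ℤ) :
    x ∈ Lset t s l σ m ↔
      ((∑ i, x (Sum.inl i) * σ i) + eN t s x 0 = 0) ∧
      (∀ k, 1 ≤ k → k ≤ l →
        eN t s x (m (k - 1)) = ∑ j ∈ Finset.Ioc (m (k - 1)) (m k), eN t s x j) := by
  constructor
  · intro hx
    constructor
    · have h0 := hx 0 (Nat.zero_le l)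
      rwa [wvec, if_pos rfl, dot_w0_eq] at h0
    · intro k hk1 hkl
      have h := hx k hkl
      rw [wvec, if_neg (by omega), dot_wk_eq t s m k (hml k hk1 hkl).1 (hml k hk1 hkl).2] at h
      linarith
  · rintro ⟨h0, hb⟩ k hkl
    rcases Nat.eq_zero_or_pos k with hk | hk
    · subst hk; rw [wvec, if_pos rfl, dot_w0_eq]; exact h0
    · rw [wvec, if_neg (by omega), dot_wk_eq t s m k (hml k hk hkl).1 (hml k hk hkl).2]
      have := hb k hk hkl
      linarith

lemma Lset_sub {t s l : ℕ} {σ : Fin t → ℤ} {m : ℕ → ℕ} {x y : Fin t ⊕ Fin (s + 1) → ℤ}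
    (hx : x ∈ Lset t s l σ m) (hy : y ∈ Lset t s l σ m) : x - y ∈ Lset t s l σ m := by
  intro k hk; rw [dot_sub, hx k hk, hy k hk, sub_zero]

lemma Lset_neg {t s l : ℕ} {σ : Fin t → ℤ} {m : ℕ → ℕ} {x : Fin t ⊕ Fin (s + 1) → ℤ}
    (hx : x ∈ Lset t s l σ m) : -x ∈ Lset t s l σ m := by
  intro k hk; rw [dot_neg, hx k hk, neg_zero]

lemma m_mono (l : ℕ) (m : ℕ → ℕ) (hmono : ∀ k, 1 ≤ k → k ≤ l → m (k - 1) < m k) :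
    ∀ k k', k ≤ k' → k' ≤ l → m k ≤ m k' := by
  intro k k' h1 h2
  induction k' with
  | zero => have : k = 0 := by omega
            subst this; exact le_refl _
  | succ n ih =>
    rcases Nat.lt_or_ge k (n + 1) with h | h
    · have h3 : m k ≤ m n := ih (by omega) (by omega)
      have h4 : m n < m (n + 1) := by
        have := hmono (n + 1) (by omega) h2
        simpa using this
      omega
    · have : k = n + 1 := by omega
      subst this; exact le_refl _

lemma path_exists (l : ℕ) (m : ℕ → ℕ) (hm0 : m 0 = 0)
    (hmono : ∀ k, 1 ≤ k → k ≤ l → m (k - 1) < m k)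
    (ξ : ℕ → ℤ)
    (hblocks : ∀ k, 1 ≤ k → k ≤ l → ξ (m (k - 1)) = ∑ j ∈ Finset.Ioc (m (k - 1)) (m k), ξ j)
    (hξ0 : 1 ≤ ξ 0) :
    ∃ P : ℕ → ℤ, P 0 = 1 ∧ (∀ j, P j = 0 ∨ (P j = 1 ∧ 1 ≤ ξ j)) ∧
      (∀ k, 1 ≤ k → k ≤ l → P (m (k - 1)) = ∑ j ∈ Finset.Ioc (m (k - 1)) (m k), P j) := by
  suffices haux : ∀ K, K ≤ l → ∃ P : ℕ → ℤ, P 0 = 1 ∧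
      (∀ j, P j = 0 ∨ (P j = 1 ∧ 1 ≤ ξ j)) ∧
      (∀ k, 1 ≤ k → k ≤ K → P (m (k - 1)) = ∑ j ∈ Finset.Ioc (m (k - 1)) (m k), P j) ∧
      (∀ j, m K < j → P j = 0) by
    obtain ⟨P, h1, h2, h3, _⟩ := haux l (le_refl l)
    exact ⟨P, h1, h2, h3⟩
  intro K
  induction K with
  | zero =>
    intro _
    refine ⟨fun j => if j = 0 then 1 else 0, by simp, ?_, fun k hk1 hk0 => absurd hk0 (by omega), ?_⟩
    · intro j
      by_cases hj : j = 0
      · subst hj; right; simp [hξ0]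
      · left; simp [hj]
    · intro j hj
      rw [hm0] at hj
      exact if_neg (by omega)
  | succ K ih =>
    intro hKl
    obtain ⟨P, h1, h2, h3, h4⟩ := ih (by omega)
    have hmK : m K < m (K + 1) := by
      have := hmono (K + 1) (by omega) hKl
      simpa using this
    rcases h2 (m K) with hP0 | ⟨hP1, hξmK⟩
    · -- P (m K) = 0 : keep P
      refine ⟨P, h1, h2, ?_, ?_⟩
      · intro k hk1 hkK
        rcases Nat.lt_or_ge k (K + 1) with hlt | hge
        · exact h3 k hk1 (by omega)
        · have hkeq : k = K + 1 := by omega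
          subst hkeq
          simp only [Nat.add_sub_cancel]
          rw [hP0]
          symm
          apply Finset.sum_eq_zero
          intro j hj
          exact h4 j (Finset.mem_Ioc.mp hj).1
      · intro j hj
        exact h4 j (by omega)
    · -- P (m K) = 1 : extend by one step
      have hsum : (1 : ℤ) ≤ ∑ j ∈ Finset.Ioc (m K) (m (K + 1)), ξ j := by
        have hb := hblocks (K + 1) (by omega) hKl
        simp only [Nat.add_sub_cancel] at hb
        rw [← hb]; exact hξmK
      have hex : ∃ j0 ∈ Finset.Ioc (m K) (m (K + 1)), 1 ≤ ξ j0 := by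
        by_contra hno
        push_neg at hno
        have : ∑ j ∈ Finset.Ioc (m K) (m (K + 1)), ξ j ≤ 0 :=
          Finset.sum_nonpos (fun j hj => by have := hno j hj; omega)
        omega
      obtain ⟨j0, hj0mem, hj0ξ⟩ := hex
      obtain ⟨hj0lo, hj0hi⟩ := Finset.mem_Ioc.mp hj0mem
      refine ⟨fun j => if j = j0 then 1 else P j,
        (if_neg (by omega : ¬ (0:ℕ) = j0)).trans h1, ?_, ?_, ?_⟩
      · intro j
        by_cases hj : j = j0
        · subst hj; right; exact ⟨if_pos rfl, hj0ξ⟩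
        · rcases h2 j with h | h
          · left; exact (if_neg hj).trans h
          · right; exact ⟨(if_neg hj).trans h.1, h.2⟩
      · intro k hk1 hkK
        rcases Nat.lt_or_ge k (K + 1) with hlt | hge
        · have hmk : m k ≤ m K := m_mono l m hmono k K (by omega) (by omega)
          have hmk1 : m (k - 1) ≤ m K := m_mono l m hmono (k - 1) K (by omega) (by omega)
          have e1 : (fun j => if j = j0 then (1:ℤ) else P j) (m (k - 1)) = P (m (k - 1)) :=
            if_neg (by omega)
          rw [e1, h3 k hk1 (by omega)]
          apply Finset.sum_congr rfl
          intro j hj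
          have h5 := (Finset.mem_Ioc.mp hj).2
          exact (if_neg (by omega : ¬ j = j0)).symm
        · have hkeq : k = K + 1 := by omega
          subst hkeq
          simp only [Nat.add_sub_cancel]
          rw [if_neg (by omega : ¬ m K = j0), hP1]
          symm
          rw [Finset.sum_eq_single j0]
          · exact if_pos rfl
          · intro j hj hne
            exact (if_neg hne).trans (h4 j (Finset.mem_Ioc.mp hj).1)
          · intro habs; exact absurd hj0mem habs
      · intro j hj
        exact (if_neg (by omega : ¬ j = j0)).trans (h4 j (by omega))

lemma greedy_exists (t : ℕ) (σ : Fin t → ℤ) (hσ1 : ∀ i, 1 ≤ σ i)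
    (hσcm : ∀ i : Fin t, σ i ≤ (∑ j ∈ Finset.univ.filter (· < i), σ j) + 1)
    (avail : Fin t → ℤ) (hav : ∀ i, 0 ≤ avail i)
    (J : ℕ) (hav1 : ∀ i : Fin t, 1 ≤ (i : ℕ) → (i : ℕ) < J → 1 ≤ avail i) :
    ∀ u : ℤ, 0 ≤ u →
      u ≤ 1 + ∑ i ∈ Finset.univ.filter (fun i : Fin t => (i : ℕ) < J), σ i * avail i →
      ∃ tk : Fin t → ℤ, (∀ i, 0 ≤ tk i ∧ tk i ≤ avail i) ∧
        (∀ i : Fin t, ¬ ((i : ℕ) < J) → tk i = 0) ∧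
        u - 1 ≤ ∑ i, σ i * tk i ∧ ∑ i, σ i * tk i ≤ u := by
  induction J with
  | zero =>
    intro u hu0 huB
    have hemp : Finset.univ.filter (fun i : Fin t => (i : ℕ) < 0) = ∅ := by
      apply Finset.filter_false_of_mem; intro i _; omega
    rw [hemp, Finset.sum_empty] at huB
    exact ⟨0, fun i => ⟨le_refl _, hav i⟩, fun i _ => rfl, by simpa using by omega,
      by simpa using hu0⟩
  | succ J ih =>
    intro u hu0 huB
    by_cases htJ : J < t
    · set iJ : Fin t := ⟨J, htJ⟩ with hiJ
      have hiJval : (iJ : ℕ) = J := rfl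
      have hfilter : Finset.univ.filter (fun i : Fin t => (i : ℕ) < J + 1) =
          insert iJ (Finset.univ.filter (fun i : Fin t => (i : ℕ) < J)) := by
        ext i
        simp only [Finset.mem_filter, Finset.mem_univ, true_and, Finset.mem_insert]
        constructor
        · intro hi
          rcases Nat.lt_or_ge (i : ℕ) J with h | h
          · right; simpa using h
          · left; apply Fin.ext; omega
        · rintro (h | h)
          · subst h; omega
          · omega
      have hnotmem : iJ ∉ Finset.univ.filter (fun i : Fin t => (i : ℕ) < J) := by
        simp only [Finset.mem_filter, Finset.mem_univ, true_and, hiJval]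
        omega
      rw [hfilter, Finset.sum_insert hnotmem] at huB
      have hσJ : 0 < σ iJ := hσ1 iJ
      set e : ℤ := min (avail iJ) (u / σ iJ) with he
      have he0 : 0 ≤ e := le_min (hav iJ) (Int.ediv_nonneg hu0 (le_of_lt hσJ))
      set u' : ℤ := u - σ iJ * e with hu'
      have hu'0 : 0 ≤ u' := by
        have h1 : e ≤ u / σ iJ := min_le_right _ _
        have h2 : σ iJ * e ≤ σ iJ * (u / σ iJ) :=
          mul_le_mul_of_nonneg_left h1 (le_of_lt hσJ)
        have h3 : u / σ iJ * σ iJ ≤ u := Int.ediv_mul_le u (ne_of_gt hσJ)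
        rw [hu']; nlinarith
      have hu'B : u' ≤ 1 + ∑ i ∈ Finset.univ.filter (fun i : Fin t => (i : ℕ) < J),
          σ i * avail i := by
        rcases le_or_gt (avail iJ) (u / σ iJ) with hcase | hcase
        · have heq : e = avail iJ := min_eq_left hcase
          rw [hu', heq]; omega
        · have heq : e = u / σ iJ := min_eq_right (le_of_lt hcase)
          have hmod : u' = u % σ iJ := by rw [hu', heq, Int.emod_def]
          have hlt : u % σ iJ < σ iJ := Int.emod_lt_of_pos u hσJ
          have hcm := hσcm iJ
          have hfe : Finset.univ.filter (· < iJ) =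
              Finset.univ.filter (fun i : Fin t => (i : ℕ) < J) := by
            apply Finset.filter_congr; intro i _
            simp [Fin.lt_def, hiJval]
          rw [hfe] at hcm
          have hkey : ∑ i ∈ Finset.univ.filter (fun i : Fin t => (i : ℕ) < J), σ i ≤
              1 + ∑ i ∈ Finset.univ.filter (fun i : Fin t => (i : ℕ) < J), σ i * avail i := by
            rcases Nat.eq_zero_or_pos J with hJ0 | hJ0
            · have hemp : Finset.univ.filter (fun i : Fin t => (i : ℕ) < J) = ∅ := by
                apply Finset.filter_false_of_mem; intro i _; omega
              simp [hemp]
            · have h0t : 0 < t := by omega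
              set i0 : Fin t := ⟨0, h0t⟩ with hi0
              have hi0val : (i0 : ℕ) = 0 := rfl
              have hmem0 : i0 ∈ Finset.univ.filter (fun i : Fin t => (i : ℕ) < J) := by
                simp only [Finset.mem_filter, Finset.mem_univ, true_and, hi0val]
                omega
              rw [← Finset.add_sum_erase _ σ hmem0,
                ← Finset.add_sum_erase _ (fun i => σ i * avail i) hmem0]
              have hσ0 : σ i0 = 1 := by
                have hc0 := hσcm i0
                have hempty : Finset.univ.filter (· < i0) = (∅ : Finset (Fin t)) := by
                  apply Finset.filter_false_of_mem; intro i _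
                  simp [Fin.lt_def, hi0val]
                rw [hempty] at hc0
                simp only [Finset.sum_empty, zero_add] at hc0
                have := hσ1 i0
                omega
              have hrest : ∀ i ∈ (Finset.univ.filter (fun i : Fin t => (i : ℕ) < J)).erase i0,
                  σ i ≤ σ i * avail i := by
                intro i hi
                simp only [Finset.mem_erase, Finset.mem_filter, Finset.mem_univ, true_and] at hi
                have hi1 : 1 ≤ (i : ℕ) := by
                  rcases Nat.eq_zero_or_pos (i : ℕ) with h0 | h1
                  · exact absurd (Fin.ext (h0.trans hi0val.symm)) hi.1
                  · exact h1
                have := hav1 i hi1 (by omega)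
                nlinarith [hσ1 i]
              have hsum2 := Finset.sum_le_sum hrest
              have hs0 : 0 ≤ σ i0 * avail i0 := mul_nonneg (by omega) (hav i0)
              omega
          omega
      obtain ⟨tk', htk'1, htk'2, htk'3, htk'4⟩ := ih
        (fun i h1 h2 => hav1 i h1 (by omega)) u' hu'0 hu'B
      have htkJ : tk' iJ = 0 := htk'2 iJ (by omega)
      have hsum : (∑ i, σ i * (if i = iJ then e else tk' i)) =
          σ iJ * e + ∑ i, σ i * tk' i := by
        have hpt : ∀ i : Fin t, σ i * (if i = iJ then e else tk' i) =
            σ i * tk' i + (if i = iJ then σ iJ * (e - tk' iJ) else 0) := by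
          intro i
          by_cases hi : i = iJ
          · subst hi; rw [if_pos rfl, if_pos rfl]; ring
          · rw [if_neg hi, if_neg hi]; ring
        rw [Finset.sum_congr rfl (fun i _ => hpt i), Finset.sum_add_distrib,
          Finset.sum_ite_eq' Finset.univ iJ]
        simp [htkJ]; ring
      refine ⟨fun i => if i = iJ then e else tk' i, ?_, ?_, ?_, ?_⟩
      · intro i
        by_cases hi : i = iJ
        · subst hi
          constructor
          · show (0 : ℤ) ≤ if iJ = iJ then e else tk' iJ
            rw [if_pos rfl]; exact he0
          · show (if iJ = iJ then e else tk' iJ) ≤ avail iJ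
            rw [if_pos rfl]; exact min_le_left _ _
        · constructor
          · show (0 : ℤ) ≤ if i = iJ then e else tk' i
            rw [if_neg hi]; exact (htk'1 i).1
          · show (if i = iJ then e else tk' i) ≤ avail i
            rw [if_neg hi]; exact (htk'1 i).2
      · intro i hi
        show (if i = iJ then e else tk' i) = 0
        have hne : ¬ i = iJ := by
          intro hh; rw [hh, hiJval] at hi; omega
        rw [if_neg hne]
        exact htk'2 i (by omega)
      · show u - 1 ≤ ∑ i, σ i * (if i = iJ then e else tk' i)
        rw [hsum]; omega
      · show (∑ i, σ i * (if i = iJ then e else tk' i)) ≤ u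
        rw [hsum]; omega
    · have hfe : Finset.univ.filter (fun i : Fin t => (i : ℕ) < J + 1) =
          Finset.univ.filter (fun i : Fin t => (i : ℕ) < J) := by
        apply Finset.filter_congr; intro i _
        have := i.isLt
        constructor <;> (intro; omega)
      rw [hfe] at huB
      obtain ⟨tk', h1, h2, h3, h4⟩ := ih (fun i hi1 hi2 => hav1 i hi1 (by omega)) u hu0 huB
      exact ⟨tk', h1, fun i hi => h2 i (by have := i.isLt; omega), h3, h4⟩

lemma dot_comm {ι : Type*} [Fintype ι] (x y : ι → ℤ) : dot x y = dot y x := by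
  unfold dot; exact Finset.sum_congr rfl (fun i _ => mul_comm _ _)

lemma dot_gain {ι : Type*} [Fintype ι] (x w : ι → ℤ) :
    dot x w - dot w w = ∑ i, w i * (x i - w i) := by
  unfold dot; rw [← Finset.sum_sub_distrib]
  exact Finset.sum_congr rfl (fun i _ => by ring)

lemma eN_elim (t s : ℕ) (b : Fin t → ℤ) (g : Fin (s + 1) → ℤ) (j : ℕ) (hj : j < s + 1) :
    eN t s (Sum.elim b g) j = g ⟨j, hj⟩ := by simp [eN, hj]

lemma eN_eq (t s : ℕ) (x : Fin t ⊕ Fin (s + 1) → ℤ) (j : ℕ) (hj : j < s + 1) :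
    eN t s x j = x (Sum.inr ⟨j, hj⟩) := by simp [eN, hj]

lemma gain_lb {b F : ℤ} (h1 : 1 ≤ b) (h2 : b ≤ F - 1) : F - 1 ≤ b * (F - b) := by nlinarith

lemma sigma_zero (t : ℕ) (σ : Fin t → ℤ) (ht : 0 < t) (hσ1 : ∀ i, 1 ≤ σ i)
    (hσcm : ∀ i : Fin t, σ i ≤ (∑ j ∈ Finset.univ.filter (· < i), σ j) + 1) :
    σ ⟨0, ht⟩ = 1 := by
  have hc0 := hσcm ⟨0, ht⟩
  have hempty : Finset.univ.filter (· < (⟨0, ht⟩ : Fin t)) = (∅ : Finset (Fin t)) := by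
    apply Finset.filter_false_of_mem; intro i _
    simp [Fin.lt_def]
  rw [hempty] at hc0
  simp only [Finset.sum_empty, zero_add] at hc0
  have := hσ1 ⟨0, ht⟩
  omega

set_option maxHeartbeats 1000000 in
lemma reducible_of (t s l : ℕ) (σ : Fin t → ℤ) (m : ℕ → ℕ) (ht : 0 < t)
    (hσ1 : ∀ i, 1 ≤ σ i) (hσmono : Monotone σ)
    (hσcm : ∀ i : Fin t, σ i ≤ (∑ j ∈ Finset.univ.filter (· < i), σ j) + 1)
    (hm0 : m 0 = 0) (hs : s = m l)
    (hmono : ∀ k, 1 ≤ k → k ≤ l → m (k - 1) < m k)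
    (x : Fin t ⊕ Fin (s + 1) → ℤ) (hx : x ∈ Lset t s l σ m)
    (hF : 2 ≤ x (Sum.inl ⟨0, ht⟩)) (hc0 : eN t s x 0 ≠ 0) :
    ∃ w y, w ∈ Lset t s l σ m ∧ y ∈ Lset t s l σ m ∧ w ≠ 0 ∧ y ≠ 0 ∧
      x = w + y ∧ 0 ≤ dot w y := by
  have hml : ∀ k, 1 ≤ k → k ≤ l → m (k - 1) < m k ∧ m k ≤ s := by
    intro k hk1 hkl
    refine ⟨hmono k hk1 hkl, ?_⟩
    rw [hs]; exact m_mono l m hmono k l hkl (le_refl l)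
  set i0 : Fin t := ⟨0, ht⟩ with hi0
  set F : ℤ := x (Sum.inl i0) with hFdef
  set ξ : ℕ → ℤ := eN t s x with hξdef
  set c : ℤ := ξ 0 with hcdef
  obtain ⟨hE0, hblk⟩ := (mem_L_iff t s l σ m hml x).mp hx
  have hσi0 : σ i0 = 1 := sigma_zero t σ ht hσ1 hσcm
  have hwit : ∀ w : Fin t ⊕ Fin (s + 1) → ℤ, w ∈ Lset t s l σ m →
      w (Sum.inl i0) ≠ 0 → x (Sum.inl i0) - w (Sum.inl i0) ≠ 0 →
      0 ≤ dot x w - dot w w →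
      ∃ w' y, w' ∈ Lset t s l σ m ∧ y ∈ Lset t s l σ m ∧ w' ≠ 0 ∧ y ≠ 0 ∧
        x = w' + y ∧ 0 ≤ dot w' y := by
    intro w hw hw0 hy0 hgain
    refine ⟨w, x - w, hw, Lset_sub hx hw, ?_, ?_, ?_, ?_⟩
    · intro h0; apply hw0; rw [h0]; rfl
    · intro h0; apply hy0
      have := congrFun h0 (Sum.inl i0)
      simpa using this
    · funext i; simp
    · have : dot w (x - w) = dot x w - dot w w := by
        rw [dot_comm w (x - w), dot_sub, dot_comm x w]
      rw [this]; exact hgain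
  rcases lt_or_gt_of_ne hc0 with hcneg | hcpos
  · -- CASE A : c ≤ -1
    have hcle : c ≤ -1 := by omega
    obtain ⟨P, hP0, hPal, hPblk⟩ := path_exists l m hm0 hmono (fun j => -(ξ j))
      (fun k hk1 hkl => by
        have hb := hblk k hk1 hkl
        show -ξ (m (k - 1)) = ∑ j ∈ Finset.Ioc (m (k - 1)) (m k), -ξ j
        rw [Finset.sum_neg_distrib]
        have hξm : ξ (m (k - 1)) = eN t s x (m (k - 1)) := rfl
        have hsum : (∑ j ∈ Finset.Ioc (m (k - 1)) (m k), ξ j) =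
            ∑ j ∈ Finset.Ioc (m (k - 1)) (m k), eN t s x j := rfl
        omega)
      (by show (1:ℤ) ≤ -ξ 0; omega)
    set w : Fin t ⊕ Fin (s + 1) → ℤ :=
      Sum.elim (fun i => if i = i0 then 1 else 0) (fun jf => -P (jf : ℕ)) with hwdef
    have hweN : ∀ j : ℕ, j < s + 1 → eN t s w j = -P j := by
      intro j hj; rw [hwdef]; exact eN_elim t s _ _ j hj
    have hwL : w ∈ Lset t s l σ m := by
      rw [mem_L_iff t s l σ m hml]
      constructor
      · have h1 : (∑ i, w (Sum.inl i) * σ i) = σ i0 := by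
          rw [hwdef]
          simp only [Sum.elim_inl, ite_mul, one_mul, zero_mul]
          exact Finset.sum_ite_eq' Finset.univ i0 σ |>.trans (by simp)
        rw [h1, hweN 0 (by omega), hP0, hσi0]; ring
      · intro k hk1 hkl
        have h1 := hPblk k hk1 hkl
        have hm1 : m (k - 1) < s + 1 := by
          have := hml k hk1 hkl; omega
        rw [hweN (m (k - 1)) hm1]
        rw [Finset.sum_congr rfl (fun j hj => hweN j
          (by have := (Finset.mem_Ioc.mp hj).2; have := (hml k hk1 hkl).2; omega))]
        rw [Finset.sum_neg_distrib]
        omega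
    apply hwit w hwL
    · rw [hwdef]; simp
    · rw [hwdef]; simp only [Sum.elim_inl, if_pos rfl]; omega
    · rw [dot_gain]
      apply Finset.sum_nonneg
      intro i _
      rcases i with i | jf
      · rw [hwdef]
        simp only [Sum.elim_inl]
        by_cases hi : i = i0
        · subst hi; rw [if_pos rfl]; simp; omega
        · rw [if_neg hi]; simp
      · rw [hwdef]
        simp only [Sum.elim_inr]
        rcases hPal (jf : ℕ) with h | ⟨h1, h2⟩
        · simp [h]
        · rw [h1]
          have hξjf : ξ (jf : ℕ) ≤ -1 := by omega
          have : x (Sum.inr jf) = ξ (jf : ℕ) := by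
            rw [hξdef, eN_eq t s x _ jf.isLt]
          rw [this]
          nlinarith
  · -- CASE B : c ≥ 1
    have hcge : 1 ≤ c := by omega
    have hceq : eN t s x 0 = c := rfl
    have hE0' : (∑ i, x (Sum.inl i) * σ i) = -c := by omega
    -- the set of "droppable" indices
    set S : Finset (Fin t) :=
      Finset.univ.filter (fun i => i ≠ i0 ∧ x (Sum.inl i) ≤ 0) with hSdef
    have hSne : S.Nonempty := by
      by_contra hSe
      rw [Finset.not_nonempty_iff_eq_empty, Finset.filter_eq_empty_iff] at hSe
      have hpos : ∀ i : Fin t, i ≠ i0 → 1 ≤ x (Sum.inl i) := by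
        intro i hi
        have := hSe (Finset.mem_univ i)
        push_neg at this
        have := this hi
        omega
      have hnn : 0 ≤ ∑ i, x (Sum.inl i) * σ i := by
        apply Finset.sum_nonneg
        intro i _
        by_cases hi : i = i0
        · subst hi; have := hσ1 i0; nlinarith
        · have h1 := hpos i hi
          have h2 := hσ1 i
          nlinarith
      omega
    have hSim : (S.image σ).Nonempty := hSne.image σ
    set μ : ℤ := (S.image σ).min' hSim with hμdef
    have hμmem : μ ∈ S.image σ := Finset.min'_mem _ _
    obtain ⟨j', hj'S, hj'σ⟩ := Finset.mem_image.mp hμmem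
    set T : Finset (Fin t) := S.filter (fun i => σ i = μ) with hTdef
    have hTne : T.Nonempty := ⟨j', Finset.mem_filter.mpr ⟨hj'S, hj'σ⟩⟩
    set j : Fin t := T.min' hTne with hjdef
    have hjT : j ∈ T := Finset.min'_mem _ _
    have hjS : j ∈ S := (Finset.mem_filter.mp hjT).1
    have hσj : σ j = μ := (Finset.mem_filter.mp hjT).2
    have hjne : j ≠ i0 := (Finset.mem_filter.mp hjS).2.1
    have hxj : x (Sum.inl j) ≤ 0 := (Finset.mem_filter.mp hjS).2.2
    have hμle : ∀ i ∈ S, μ ≤ σ i := by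
      intro i hi
      exact Finset.min'_le _ _ (Finset.mem_image_of_mem σ hi)
    have hjmin : ∀ i ∈ T, j ≤ i := fun i hi => Finset.min'_le _ _ hi
    have hjval : 1 ≤ (j : ℕ) := by
      rcases Nat.eq_zero_or_pos (j : ℕ) with h0 | h1
      · exact absurd (Fin.ext (by rw [h0])) hjne
      · exact h1
    have hbelow : ∀ i : Fin t, i ≠ i0 → (i : ℕ) < (j : ℕ) → 1 ≤ x (Sum.inl i) := by
      intro i hi hij
      by_contra hneg
      push_neg at hneg
      have hiS : i ∈ S := Finset.mem_filter.mpr ⟨Finset.mem_univ i, hi, by omega⟩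
      have h1 : μ ≤ σ i := hμle i hiS
      have h2 : σ i ≤ σ j := hσmono (le_of_lt (by rwa [Fin.lt_def]))
      have h3 : σ i = μ := by omega
      have h4 : j ≤ i := hjmin i (Finset.mem_filter.mpr ⟨hiS, h3⟩)
      rw [Fin.le_def] at h4
      omega
    set avail : Fin t → ℤ :=
      fun i => if i = i0 then F - 2 else max (x (Sum.inl i)) 0 with havdef
    have hav : ∀ i, 0 ≤ avail i := by
      intro i
      show (0 : ℤ) ≤ if i = i0 then F - 2 else max (x (Sum.inl i)) 0
      by_cases hi : i = i0
      · rw [if_pos hi]; omega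
      · rw [if_neg hi]; exact le_max_right _ _
    have hav1 : ∀ i : Fin t, 1 ≤ (i : ℕ) → (i : ℕ) < (j : ℕ) → 1 ≤ avail i := by
      intro i h1 h2
      have hi : i ≠ i0 := by
        intro hh; rw [hh] at h1
        have h00 : (i0 : ℕ) = 0 := rfl
        omega
      have := hbelow i hi h2
      have he : avail i = max (x (Sum.inl i)) 0 := if_neg hi
      rw [he]
      omega
    have havx : ∀ i : Fin t, i ≠ i0 → (i : ℕ) < (j : ℕ) → avail i = x (Sum.inl i) := by
      intro i hi hij
      have := hbelow i hi hij
      have he : avail i = max (x (Sum.inl i)) 0 := if_neg hi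
      rw [he]
      omega
    have hi0mem : i0 ∈ Finset.univ.filter (fun i : Fin t => (i : ℕ) < (j : ℕ)) := by
      simp only [Finset.mem_filter, Finset.mem_univ, true_and]
      show (0 : ℕ) < (j : ℕ)
      omega
    have huB : σ j - 1 ≤ 1 + ∑ i ∈ Finset.univ.filter (fun i : Fin t => (i : ℕ) < (j : ℕ)),
        σ i * avail i := by
      have hcm := hσcm j
      have hfe : Finset.univ.filter (· < j) =
          Finset.univ.filter (fun i : Fin t => (i : ℕ) < (j : ℕ)) := by
        apply Finset.filter_congr; intro i _
        exact Fin.lt_def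
      rw [hfe] at hcm
      have hkey : ∑ i ∈ Finset.univ.filter (fun i : Fin t => (i : ℕ) < (j : ℕ)), σ i ≤
          1 + ∑ i ∈ Finset.univ.filter (fun i : Fin t => (i : ℕ) < (j : ℕ)), σ i * avail i := by
        rw [← Finset.add_sum_erase _ σ hi0mem,
          ← Finset.add_sum_erase _ (fun i => σ i * avail i) hi0mem]
        have hrest : ∀ i ∈ (Finset.univ.filter
            (fun i : Fin t => (i : ℕ) < (j : ℕ))).erase i0,
            σ i ≤ σ i * avail i := by
          intro i hi
          simp only [Finset.mem_erase, Finset.mem_filter, Finset.mem_univ, true_and] at hi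
          have hi1 : 1 ≤ (i : ℕ) := by
            rcases Nat.eq_zero_or_pos (i : ℕ) with h0 | h1
            · exact absurd (Fin.ext (by rw [h0])) hi.1
            · exact h1
          have := hav1 i hi1 hi.2
          nlinarith [hσ1 i]
        have hsum2 := Finset.sum_le_sum hrest
        have hs0 : 0 ≤ σ i0 * avail i0 := by
          have hai : avail i0 = F - 2 := if_pos rfl
          rw [hai]
          have := hσ1 i0
          nlinarith
        omega
      omega
    obtain ⟨tk, htk, hsupp, hlo, hhi⟩ := greedy_exists t σ hσ1 hσcm avail hav (j : ℕ) hav1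
      (σ j - 1) (by have := hσ1 j; omega) huB
    set r : ℤ := σ j - 1 - ∑ i, σ i * tk i with hrdef
    have hr01 : r = 0 ∨ r = 1 := by omega
    have htkj : tk j = 0 := hsupp j (by omega)
    have htki0 : 0 ≤ tk i0 ∧ tk i0 ≤ F - 2 := by
      have h1 := (htk i0).1
      have h2 := (htk i0).2
      rw [show avail i0 = F - 2 from if_pos rfl] at h2
      exact ⟨h1, h2⟩
    obtain ⟨P, hP0, hPal, hPblk⟩ := path_exists l m hm0 hmono ξ
      (fun k hk1 hkl => hblk k hk1 hkl) hcge
    set b : Fin t → ℤ := fun i =>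
      x (Sum.inl i) + (if i = j then 1 else 0) - (if i = i0 then 1 else 0) - tk i with hbdef
    have hbi0 : b i0 = F - 1 - tk i0 := by
      rw [hbdef]
      show x (Sum.inl i0) + (if i0 = j then 1 else 0) - (if i0 = i0 then 1 else 0) - tk i0 = _
      rw [if_neg (Ne.symm hjne), if_pos rfl]
      omega
    have hbj : b j = x (Sum.inl j) + 1 := by
      rw [hbdef]
      show x (Sum.inl j) + (if j = j then 1 else 0) - (if j = i0 then 1 else 0) - tk j = _
      rw [if_pos rfl, if_neg hjne, htkj]
      ring
    have hbelse : ∀ i : Fin t, i ≠ i0 → i ≠ j → b i = x (Sum.inl i) - tk i := by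
      intro i h1 h2
      rw [hbdef]
      show x (Sum.inl i) + (if i = j then 1 else 0) - (if i = i0 then 1 else 0) - tk i = _
      rw [if_neg h2, if_neg h1]
      ring
    have hbsum : (∑ i, b i * σ i) = r - c := by
      have hpt : ∀ i : Fin t, b i * σ i = x (Sum.inl i) * σ i +
          ((if i = j then σ i else 0) - (if i = i0 then σ i else 0) - σ i * tk i) := by
        intro i
        rw [hbdef]
        show (x (Sum.inl i) + (if i = j then 1 else 0) - (if i = i0 then 1 else 0) - tk i)
          * σ i = _
        by_cases h1 : i = j
        · subst h1
          rw [if_pos rfl, if_pos rfl, if_neg hjne, if_neg hjne]; ring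
        · by_cases h2 : i = i0
          · subst h2
            rw [if_neg h1, if_neg h1, if_pos rfl, if_pos rfl]; ring
          · rw [if_neg h1, if_neg h1, if_neg h2, if_neg h2]; ring
      rw [Finset.sum_congr rfl (fun i _ => hpt i), Finset.sum_add_distrib, hE0']
      have h1 : (∑ i, ((if i = j then σ i else 0) - (if i = i0 then σ i else 0) - σ i * tk i))
          = σ j - σ i0 - ∑ i, σ i * tk i := by
        rw [Finset.sum_sub_distrib, Finset.sum_sub_distrib,
          Finset.sum_ite_eq' Finset.univ j σ, Finset.sum_ite_eq' Finset.univ i0 σ]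
        simp
      rw [h1, hσi0]
      rw [hrdef]
      ring
    set w : Fin t ⊕ Fin (s + 1) → ℤ :=
      Sum.elim b (fun jf => x (Sum.inr jf) - r * P (jf : ℕ)) with hwdef
    have hweN : ∀ j' : ℕ, j' < s + 1 → eN t s w j' = eN t s x j' - r * P j' := by
      intro j' hj'
      rw [hwdef, eN_elim t s _ _ j' hj', ← eN_eq t s x j' hj']
    have hwinl : ∀ i : Fin t, w (Sum.inl i) = b i := fun i => rfl
    have hwL : w ∈ Lset t s l σ m := by
      rw [mem_L_iff t s l σ m hml]
      constructor
      · rw [Finset.sum_congr rfl (fun i _ => by rw [hwinl i]), hbsum,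
          hweN 0 (by omega), hP0, hceq]
        ring
      · intro k hk1 hkl
        have hm1 : m (k - 1) < s + 1 := by
          have := hml k hk1 hkl; omega
        rw [hweN (m (k - 1)) hm1]
        rw [Finset.sum_congr rfl (fun j' hj' => hweN j'
          (by have := (Finset.mem_Ioc.mp hj').2; have := (hml k hk1 hkl).2; omega))]
        rw [Finset.sum_sub_distrib]
        have hmul : (∑ j' ∈ Finset.Ioc (m (k - 1)) (m k), r * P j') =
            r * ∑ j' ∈ Finset.Ioc (m (k - 1)) (m k), P j' := by
          rw [Finset.mul_sum]
        rw [hmul]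
        have hb1 := hblk k hk1 hkl
        have hp1 := hPblk k hk1 hkl
        linear_combination hb1 - r * hp1
    apply hwit w hwL
    · rw [hwinl i0, hbi0]; omega
    · rw [hwinl i0, hbi0]; omega
    · rw [dot_gain, Fintype.sum_sum_type]
      have hinr : 0 ≤ ∑ jf : Fin (s + 1), w (Sum.inr jf) * (x (Sum.inr jf) - w (Sum.inr jf)) := by
        apply Finset.sum_nonneg
        intro jf _
        have hwjf : w (Sum.inr jf) = x (Sum.inr jf) - r * P (jf : ℕ) := rfl
        rw [hwjf]
        have hxi : ξ (jf : ℕ) = x (Sum.inr jf) := by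
          rw [hξdef, eN_eq t s x _ jf.isLt]
        rcases hr01 with h | h
        · rw [h]; ring_nf; exact le_refl 0
        · rw [h]
          rcases hPal (jf : ℕ) with hp | ⟨hp, hξ1⟩
          · rw [hp]; ring_nf; exact le_refl 0
          · rw [hp]
            rw [← hxi]
            nlinarith
      have hjmem : j ∈ Finset.univ.erase i0 := Finset.mem_erase.mpr ⟨hjne, Finset.mem_univ j⟩
      have hsplit : (∑ i : Fin t, w (Sum.inl i) * (x (Sum.inl i) - w (Sum.inl i))) =
          b i0 * (x (Sum.inl i0) - b i0) + (b j * (x (Sum.inl j) - b j) +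
            ∑ i ∈ (Finset.univ.erase i0).erase j, b i * (x (Sum.inl i) - b i)) := by
        rw [Finset.sum_congr rfl (fun i _ => by rw [hwinl i])]
        rw [← Finset.add_sum_erase _ _ (Finset.mem_univ i0)]
        rw [← Finset.add_sum_erase _ _ hjmem]
      rw [hsplit]
      have h_i0 : F - 1 ≤ b i0 * (x (Sum.inl i0) - b i0) := by
        rw [hbi0]
        have h1 : (1 : ℤ) ≤ F - 1 - tk i0 := by omega
        have h2 : F - 1 - tk i0 ≤ F - 1 := by omega
        have := gain_lb h1 h2
        have hxF : x (Sum.inl i0) = F := rfl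
        rw [hxF]
        nlinarith
      have h_j : -1 ≤ b j * (x (Sum.inl j) - b j) := by
        rw [hbj]; nlinarith
      have h_rest : 0 ≤ ∑ i ∈ (Finset.univ.erase i0).erase j,
          b i * (x (Sum.inl i) - b i) := by
        apply Finset.sum_nonneg
        intro i hi
        have hine : i ≠ j := (Finset.mem_erase.mp hi).1
        have hine0 : i ≠ i0 := (Finset.mem_erase.mp (Finset.mem_erase.mp hi).2).1
        rw [hbelse i hine0 hine]
        by_cases hij : (i : ℕ) < (j : ℕ)
        · have h1 := (htk i).1
          have h2 := (htk i).2
          rw [havx i hine0 hij] at h2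
          nlinarith
        · rw [hsupp i hij]
          ring_nf
          exact le_refl 0
      linarith

lemma dot_neg_neg {ι : Type*} [Fintype ι] (x y : ι → ℤ) : dot (-x) (-y) = dot x y := by
  unfold dot; exact Finset.sum_congr rfl (fun i _ => by simp)


theorem aux_main (t s l : ℕ) (m : ℕ → ℕ) (σ : Fin t → ℤ)
    (hσ1 : ∀ i, 1 ≤ σ i) (ht : 0 < t)
    (hσmono : Monotone σ)
    (hσcm : ∀ i : Fin t, σ i ≤ (∑ j ∈ Finset.univ.filter (· < i), σ j) + 1)
    (hm0 : m 0 = 0) (hs : s = m l)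
    (hmono : ∀ k, 1 ≤ k → k ≤ l → m (k - 1) < m k)
    (x : Fin t ⊕ Fin (s + 1) → ℤ) (hx : x ∈ Lset t s l σ m)
    (hirr : IrredIn (Lset t s l σ m) x)
    (he0 : dot x (evec t s 0) ≠ 0) :
    |dot x (fvec t s ⟨0, ht⟩)| ≤ 1 := by
  rw [dot_fvec]
  by_contra habs
  rw [not_le] at habs
  set F : ℤ := x (Sum.inl ⟨0, ht⟩) with hFdef
  rw [dot_evec] at he0
  have hzero : ((0 : Fin (s + 1)) : ℕ) = 0 := rfl
  have heN0 : eN t s x 0 = x (Sum.inr 0) := by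
    rw [eN_eq t s x 0 (by omega)]
    congr 1
  have hcases : 2 ≤ F ∨ F ≤ -2 := by
    rcases le_or_gt 0 F with h | h
    · left; rw [abs_of_nonneg h] at habs; omega
    · right; rw [abs_of_neg h] at habs; omega
  rcases hcases with hF | hF
  · obtain ⟨w, y, hw, hy, hw0, hy0, hxy, hdot⟩ :=
      reducible_of t s l σ m ht hσ1 hσmono hσcm hm0 hs hmono x hx hF
        (by rw [heN0]; exact he0)
    exact hirr ⟨w, y, hw, hy, hw0, hy0, hxy, hdot⟩
  · have hxneg : -x ∈ Lset t s l σ m := Lset_neg hx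
    have hFneg : 2 ≤ (-x) (Sum.inl ⟨0, ht⟩) := by
      rw [Pi.neg_apply]; omega
    have heneg : eN t s (-x) 0 ≠ 0 := by
      rw [eN_eq t s (-x) 0 (by omega), Pi.neg_apply]
      intro hcontra
      apply he0
      have : x (Sum.inr ⟨0, by omega⟩) = 0 := by omega
      rwa [show (⟨0, by omega⟩ : Fin (s + 1)) = 0 from rfl] at this
    obtain ⟨w, y, hw, hy, hw0, hy0, hxy, hdot⟩ :=
      reducible_of t s l σ m ht hσ1 hσmono hσcm hm0 hs hmono (-x) hxneg hFneg heneg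
    refine hirr ⟨-w, -y, Lset_neg hw, Lset_neg hy, neg_ne_zero.mpr hw0, neg_ne_zero.mpr hy0,
      ?_, ?_⟩
    · have h1 := congrArg Neg.neg hxy
      rw [neg_neg, neg_add] at h1
      exact h1
    · rw [dot_neg_neg]; exact hdot

/-- Part of Lemma 6.9 of the paper: if `σ_i ≥ 1` for all `i`, and `x ∈ L` is
irreducible with `x·e_0 ≠ 0`, then `|x·f_1| ≤ 1`. -/
theorem stmt_12 (p q n r : ℤ) (t s l : ℕ) (a : ℕ → ℤ) (m : ℕ → ℕ) (σ : Fin t → ℤ)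
    (h : IsCMLattice p q n r t s l a m σ) (hσ1 : ∀ i, 1 ≤ σ i) (ht : 0 < t)
    (x : Fin t ⊕ Fin (s + 1) → ℤ) (hx : x ∈ Lset t s l σ m)
    (hirr : IrredIn (Lset t s l σ m) x)
    (he0 : dot x (evec t s 0) ≠ 0) :
    |dot x (fvec t s ⟨0, ht⟩)| ≤ 1 := by
  apply aux_main t s l m σ hσ1 ht h.hσmono h.hσcm h.hm0 h.hs _ x hx hirr he0
  intro k hk1 hkl
  have h1 := h.hmrec k hk1 hkl
  have h2 := h.hak k hk1 hkl
  omega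
end
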